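/- arXiv:1606.01230 — 5 statements merged into one kernel-verified Lean document; each statement's English description precedes it below -/
import Mathlib

section
/- With the lifting construction in F_p^{n+2}, every two-dimensional subspace of F_p^{n+2} contains at most one triangle from X' × Y' × Z': if (x_i', y_j', z_k') is a triangle (i.e., x_i' + y_j' + z_k' = 0) spanning a 2-dimensional subspace U, then the only triangle in X' × Y' × Z' contained in U is (x_i', y_j', z_k'). -/
/-- With the lifting construction, every two-dimensional subspace contains at most one
triangle from X' × Y' × Z': the span of a triangle contains no other triangle. -/
theorem stmt_3 (p n m : ℕ) [Fact p.Prime]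
    (x y z : Fin m → (Fin n → ZMod p))
    (htri : ∀ i, x i + y i + z i = 0)
    (hx : Function.Injective x) (hy : Function.Injective y) (hz : Function.Injective z)
    (x' y' z' : Fin m → (Fin n → ZMod p) × ZMod p × ZMod p)
    (hx' : ∀ i, x' i = (x i, 1, 0))
    (hy' : ∀ i, y' i = (y i, -1, 1))
    (hz' : ∀ i, z' i = (z i, 0, -1)) :
    ∀ i j k, x' i + y' j + z' k = 0 →
      ∀ i' j' k', x' i' + y' j' + z' k' = 0 →
        x' i' ∈ Submodule.span (ZMod p) {x' i, y' j} →
        y' j' ∈ Submodule.span (ZMod p) {x' i, y' j} →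
        z' k' ∈ Submodule.span (ZMod p) {x' i, y' j} →
        x' i' = x' i ∧ y' j' = y' j ∧ z' k' = z' k := by
  intro i j k h1 i' j' k' h2 hxs hys _
  rw [Submodule.mem_span_pair] at hxs hys
  obtain ⟨a, b, hab⟩ := hxs
  obtain ⟨c, d, hcd⟩ := hys
  simp only [hx', hy', Prod.smul_mk, Prod.mk_add_mk, Prod.mk.injEq, smul_eq_mul] at hab hcd
  obtain ⟨hab1, hab2, hab3⟩ := hab
  obtain ⟨hcd1, hcd2, hcd3⟩ := hcd
  have hb : b = 0 := by linear_combination hab3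
  have ha : a = 1 := by linear_combination hab2 + hab3
  have hd : d = 1 := by linear_combination hcd3
  have hc : c = 0 := by linear_combination hcd2 + hcd3
  subst ha hb hc hd
  have hxi : x' i' = x' i := by rw [hx', hx', ← hab1]; simp
  have hyj : y' j' = y' j := by rw [hy', hy', ← hcd1]; simp
  refine ⟨hxi, hyj, ?_⟩
  have := h1
  rw [← hxi, ← hyj] at this
  exact (add_left_cancel (this.trans h2.symm)).symm
end

section
/- Let {(x_i, y_i, z_i)}_{i=1}^m be a multicolored sum-free collection in F_p^n, and form X' = {x_i} × F_p^l, Y' = {y_i} × F_p^l, Z' = {z_i} × F_p^l in F_p^{n+l}. Then any sets of deletions D_X ⊆ X', D_Y ⊆ Y', D_Z ⊆ Z' whose removal leaves no triangle (triple summing to zero) in (X'∖D_X) × (Y'∖D_Y) × (Z'∖D_Z) must satisfy |D_X| + |D_Y| + |D_Z| ≥ m · p^l. -/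
/-- For the blow-up of a multicolored sum-free collection, any deletion sets
destroying all triangles must have total size at least m · p^l. -/
theorem stmt_7 (p n l m : ℕ) [Fact p.Prime]
    (x y z : Fin m → (Fin n → ZMod p))
    (h : ∀ i j k, x i + y j + z k = 0 ↔ (i = j ∧ j = k))
    (DX DY DZ : Finset ((Fin n → ZMod p) × (Fin l → ZMod p)))
    (hDX : DX ⊆ Finset.univ.image x ×ˢ (Finset.univ : Finset (Fin l → ZMod p)))
    (hDY : DY ⊆ Finset.univ.image y ×ˢ (Finset.univ : Finset (Fin l → ZMod p)))
    (hDZ : DZ ⊆ Finset.univ.image z ×ˢ (Finset.univ : Finset (Fin l → ZMod p)))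
    (hdestroy : ∀ u ∈ (Finset.univ.image x ×ˢ (Finset.univ : Finset (Fin l → ZMod p))) \ DX,
      ∀ v ∈ (Finset.univ.image y ×ˢ (Finset.univ : Finset (Fin l → ZMod p))) \ DY,
      ∀ w ∈ (Finset.univ.image z ×ˢ (Finset.univ : Finset (Fin l → ZMod p))) \ DZ,
        u + v + w ≠ 0) :
    m * p ^ l ≤ DX.card + DY.card + DZ.card := by
  classical
  -- the zero-sum triples
  have hzero : ∀ i, x i + y i + z i = 0 := fun i => (h i i i).mpr ⟨rfl, rfl⟩
  have hx : Function.Injective x := by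
    intro i j hij
    have : x i + y j + z j = 0 := by rw [hij]; exact hzero j
    exact ((h i j j).mp this).1
  have hy : Function.Injective y := by
    intro i j hij
    have : x j + y i + z j = 0 := by rw [hij]; exact hzero j
    exact (((h j i j).mp this).1).symm
  have hz : Function.Injective z := by
    intro i j hij
    have : x j + y j + z i = 0 := by rw [hij]; exact hzero j
    exact (((h j j i).mp this).2).symm
  set SX : Fin m → Finset ((Fin n → ZMod p) × (Fin l → ZMod p)) :=
    fun i => DX.filter (fun q => q.1 = x i) with hSXdef
  set SY : Fin m → Finset ((Fin n → ZMod p) × (Fin l → ZMod p)) :=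
    fun i => DY.filter (fun q => q.1 = y i) with hSYdef
  set SZ : Fin m → Finset ((Fin n → ZMod p) × (Fin l → ZMod p)) :=
    fun i => DZ.filter (fun q => q.1 = z i) with hSZdef
  have hcard : Fintype.card (Fin l → ZMod p) = p ^ l := by
    simp [Fintype.card_fun, ZMod.card]
  -- key per-index bound
  have key : ∀ i : Fin m, p ^ l ≤ (SX i).card + (SY i).card + (SZ i).card := by
    intro i
    by_contra hlt
    push_neg at hlt
    set FX := (SX i).image Prod.snd with hFXdef
    set FY := (SY i).image Prod.snd with hFYdef
    set FZ := (SZ i).image Prod.snd with hFZdef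
    have hFXc : FX.card ≤ (SX i).card := Finset.card_image_le
    have hFYc : FY.card ≤ (SY i).card := Finset.card_image_le
    have hFZc : FZ.card ≤ (SZ i).card := Finset.card_image_le
    -- pick c ∉ FZ
    have hcompl : 0 < FZᶜ.card := by
      rw [Finset.card_compl, hcard]
      omega
    obtain ⟨c, hc⟩ := Finset.card_pos.mp hcompl
    rw [Finset.mem_compl] at hc
    -- pigeonhole: FXᶜ meets the image of FYᶜ under b ↦ -b - c
    set B := FYᶜ.image (fun b => -b - c) with hBdef
    have hBcard : B.card = FYᶜ.card := by
      apply Finset.card_image_of_injective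
      intro a b hab
      have : -a = -b := by
        have := congrArg (· + c) hab
        simpa [sub_add_cancel] using this
      exact neg_injective this
    have hinter : (FXᶜ ∩ B).Nonempty := by
      by_contra hemp
      rw [Finset.not_nonempty_iff_eq_empty] at hemp
      have hdisj : Disjoint FXᶜ B := Finset.disjoint_iff_inter_eq_empty.mpr hemp
      have hle : (FXᶜ ∪ B).card ≤ p ^ l := by
        rw [← hcard]
        exact Finset.card_le_univ _
      rw [Finset.card_union_of_disjoint hdisj, hBcard, Finset.card_compl,
        Finset.card_compl, hcard] at hle
      have h1 : FX.card ≤ p ^ l := by rw [← hcard]; exact Finset.card_le_univ _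
      have h2 : FY.card ≤ p ^ l := by rw [← hcard]; exact Finset.card_le_univ _
      omega
    obtain ⟨a, ha⟩ := hinter
    rw [Finset.mem_inter] at ha
    obtain ⟨haX, haB⟩ := ha
    rw [Finset.mem_compl] at haX
    rw [hBdef, Finset.mem_image] at haB
    obtain ⟨b, hbY, hab⟩ := haB
    rw [Finset.mem_compl] at hbY
    -- build the surviving triangle
    have hu : ((x i, a) : (Fin n → ZMod p) × (Fin l → ZMod p)) ∈
        (Finset.univ.image x ×ˢ (Finset.univ : Finset (Fin l → ZMod p))) \ DX := by
      rw [Finset.mem_sdiff]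
      constructor
      · exact Finset.mem_product.mpr ⟨Finset.mem_image_of_mem x (Finset.mem_univ i),
          Finset.mem_univ _⟩
      · intro hmem
        exact haX (Finset.mem_image.mpr ⟨(x i, a), Finset.mem_filter.mpr ⟨hmem, rfl⟩, rfl⟩)
    have hv : ((y i, b) : (Fin n → ZMod p) × (Fin l → ZMod p)) ∈
        (Finset.univ.image y ×ˢ (Finset.univ : Finset (Fin l → ZMod p))) \ DY := by
      rw [Finset.mem_sdiff]
      constructor
      · exact Finset.mem_product.mpr ⟨Finset.mem_image_of_mem y (Finset.mem_univ i),
          Finset.mem_univ _⟩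
      · intro hmem
        exact hbY (Finset.mem_image.mpr ⟨(y i, b), Finset.mem_filter.mpr ⟨hmem, rfl⟩, rfl⟩)
    have hw : ((z i, c) : (Fin n → ZMod p) × (Fin l → ZMod p)) ∈
        (Finset.univ.image z ×ˢ (Finset.univ : Finset (Fin l → ZMod p))) \ DZ := by
      rw [Finset.mem_sdiff]
      constructor
      · exact Finset.mem_product.mpr ⟨Finset.mem_image_of_mem z (Finset.mem_univ i),
          Finset.mem_univ _⟩
      · intro hmem
        exact hc (Finset.mem_image.mpr ⟨(z i, c), Finset.mem_filter.mpr ⟨hmem, rfl⟩, rfl⟩)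
    apply hdestroy _ hu _ hv _ hw
    have h2 : a + b + c = 0 := by rw [← hab]; ring
    rw [Prod.ext_iff]
    exact ⟨by simpa using hzero i, by simpa using h2⟩
  -- sum the fibers
  have hsumX : ∑ i : Fin m, (SX i).card ≤ DX.card := by
    rw [← Finset.card_biUnion]
    · exact Finset.card_le_card (Finset.biUnion_subset.mpr fun i _ => Finset.filter_subset _ _)
    · intro i _ j _ hij
      simp only [Finset.disjoint_left, hSXdef, Finset.mem_filter]
      rintro q ⟨_, h1⟩ ⟨_, h2⟩
      exact hij (hx (h1 ▸ h2 ▸ rfl))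
  have hsumY : ∑ i : Fin m, (SY i).card ≤ DY.card := by
    rw [← Finset.card_biUnion]
    · exact Finset.card_le_card (Finset.biUnion_subset.mpr fun i _ => Finset.filter_subset _ _)
    · intro i _ j _ hij
      simp only [Finset.disjoint_left, hSYdef, Finset.mem_filter]
      rintro q ⟨_, h1⟩ ⟨_, h2⟩
      exact hij (hy (h1 ▸ h2 ▸ rfl))
  have hsumZ : ∑ i : Fin m, (SZ i).card ≤ DZ.card := by
    rw [← Finset.card_biUnion]
    · exact Finset.card_le_card (Finset.biUnion_subset.mpr fun i _ => Finset.filter_subset _ _)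
    · intro i _ j _ hij
      simp only [Finset.disjoint_left, hSZdef, Finset.mem_filter]
      rintro q ⟨_, h1⟩ ⟨_, h2⟩
      exact hij (hz (h1 ▸ h2 ▸ rfl))
  calc m * p ^ l = ∑ _i : Fin m, p ^ l := by simp [mul_comm]
    _ ≤ ∑ i : Fin m, ((SX i).card + (SY i).card + (SZ i).card) :=
        Finset.sum_le_sum fun i _ => key i
    _ = (∑ i : Fin m, (SX i).card) + (∑ i : Fin m, (SY i).card) + (∑ i : Fin m, (SZ i).card) := by
        rw [Finset.sum_add_distrib, Finset.sum_add_distrib]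
    _ ≤ DX.card + DY.card + DZ.card := by omega
end

section
/- Assume the multicolored sum-free bound: any collection {(a_i,b_i,c_i)}_{i=1}^T in F_p^d with a_i + b_j + c_k = 0 iff i = j = k has T ≤ p^{(1−c_p)d}, where 0 < c_p < 1. Let 0 < ρ ≤ 1/(5p³) and let X, Y, Z ⊂ F_p^n ∖ {0} be pairwise disjoint sets such that any two vectors in X ∪ Y ∪ Z are linearly independent, every 2-dimensional subspace contains at most one triangle of X×Y×Z, and every element of X ∪ Y ∪ Z lies in at most ρN triangles (N = p^n). If the total number of triangles in X × Y × Z is δN², then δ ≤ 125 p² ρ^{1+c_p}. -/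
open Matrix Module Finset

section AuxStmt13

variable {p : ℕ} [Fact p.Prime]

private theorem cardSub' {n : ℕ} (K : Submodule (ZMod p) (Fin n → ZMod p)) :
    Nat.card K = p ^ Module.finrank (ZMod p) K := by
  have : Fintype K := Fintype.ofFinite _
  have h := card_eq_pow_finrank (K := ZMod p) (V := K)
  rw [ZMod.card] at h
  rw [Nat.card_eq_fintype_card, h]

private theorem finrankKer' {n k : ℕ} (v : Fin k → (Fin n → ZMod p))
    (hv : LinearIndependent (ZMod p) v) :
    Module.finrank (ZMod p) (LinearMap.ker (Matrix.of v).mulVecLin) = n - k := by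
  have hr : (Matrix.of v).rank = k := by
    rw [← Matrix.rank_transpose, Matrix.rank]
    have h1 : Function.Injective ((Matrix.of v)ᵀ).mulVecLin := by
      show Function.Injective ((Matrix.of v)ᵀ).mulVec
      rw [Matrix.mulVec_injective_iff]
      simpa using hv
    rw [LinearMap.finrank_range_of_inj h1]
    simp
  have hkn : k ≤ n := by
    have := Matrix.rank_le_card_width (Matrix.of v)
    rw [hr] at this; simpa using this
  have h2 := LinearMap.finrank_range_add_finrank_ker (Matrix.of v).mulVecLin
  rw [Module.finrank_pi] at h2
  rw [show Module.finrank (ZMod p) (LinearMap.range (Matrix.of v).mulVecLin)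
      = (Matrix.of v).rank from rfl, hr] at h2
  simp only [Fintype.card_fin] at h2
  omega

private theorem countVec' {n k : ℕ} (v : Fin k → (Fin n → ZMod p))
    (hv : LinearIndependent (ZMod p) v) :
    Nat.card {w : Fin n → ZMod p // ∀ i, v i ⬝ᵥ w = 0} = p ^ (n - k) := by
  have e : {w : Fin n → ZMod p // ∀ i, v i ⬝ᵥ w = 0} ≃ LinearMap.ker (Matrix.of v).mulVecLin := by
    apply Equiv.subtypeEquivRight
    intro w
    simp only [LinearMap.mem_ker, Matrix.mulVecLin_apply]
    constructor
    · intro h; funext i; exact h i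
    · intro h i; exact congrFun h i
  rw [Nat.card_congr e, cardSub', finrankKer' v hv]

private theorem countMat' {m n k : ℕ} (v : Fin k → (Fin n → ZMod p))
    (hv : LinearIndependent (ZMod p) v) :
    Nat.card {Φ : Matrix (Fin m) (Fin n) (ZMod p) // ∀ i, Φ *ᵥ v i = 0}
      = (p ^ (n - k)) ^ m := by
  have e1 : {Φ : Matrix (Fin m) (Fin n) (ZMod p) // ∀ i, Φ *ᵥ v i = 0}
      ≃ {f : Fin m → (Fin n → ZMod p) // ∀ r, ∀ i, v i ⬝ᵥ f r = 0} := by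
    apply Equiv.subtypeEquivRight
    intro Φ
    constructor
    · intro h r i; rw [dotProduct_comm]; exact congrFun (h i) r
    · intro h i; funext r; rw [show (Φ *ᵥ v i) r = Φ r ⬝ᵥ v i from rfl, dotProduct_comm]
      exact h r i
  have e2 := Equiv.subtypePiEquivPi (β := fun _ : Fin m => Fin n → ZMod p)
      (p := fun _ w => ∀ i, v i ⬝ᵥ w = 0)
  rw [Nat.card_congr (e1.trans e2), Nat.card_pi, Finset.prod_const, countVec' v hv,
    Finset.card_univ, Fintype.card_fin]

private theorem kerRel' {m n : ℕ} (h : m ≤ n) (Φ : Matrix (Fin m) (Fin n) (ZMod p)) :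
    Module.finrank (ZMod p) (LinearMap.ker Φ.mulVecLin)
      = (n - m) + Module.finrank (ZMod p) (LinearMap.ker Φᵀ.mulVecLin) := by
  have h1 := LinearMap.finrank_range_add_finrank_ker Φ.mulVecLin
  have h2 := LinearMap.finrank_range_add_finrank_ker Φᵀ.mulVecLin
  rw [Module.finrank_pi] at h1 h2
  rw [show Module.finrank (ZMod p) (LinearMap.range Φ.mulVecLin) = Φ.rank from rfl] at h1
  rw [show Module.finrank (ZMod p) (LinearMap.range Φᵀ.mulVecLin) = Φᵀ.rank from rfl,
    Matrix.rank_transpose] at h2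
  have h3 : Φ.rank ≤ m := Φ.rank_le_card_height.trans (by simp)
  simp only [Fintype.card_fin] at h1 h2
  omega

private theorem goodBound' {n m : ℕ} {c : ℝ}
    (hsf : ∀ d T : ℕ, ∀ a b e : Fin T → (Fin d → ZMod p),
      (∀ i j k, a i + b j + e k = 0 ↔ (i = j ∧ j = k)) →
      (T : ℝ) ≤ (p : ℝ) ^ ((1 - c) * (d : ℝ)))
    (X Y Z : Finset (Fin n → ZMod p))
    (Φ : Matrix (Fin m) (Fin n) (ZMod p))
    (T A G : Finset ((Fin n → ZMod p) × (Fin n → ZMod p) × (Fin n → ZMod p)))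
    (hT : ∀ t ∈ T, t.1 + t.2.1 + t.2.2 = 0)
    (hTXYZ : ∀ t ∈ T, t.1 ∈ X ∧ t.2.1 ∈ Y ∧ t.2.2 ∈ Z)
    (hT' : ∀ x ∈ X, ∀ y ∈ Y, ∀ z ∈ Z, x + y + z = 0 → (x, y, z) ∈ T)
    (hA : ∀ t ∈ A, t ∈ T ∧ Φ *ᵥ t.1 = 0 ∧ Φ *ᵥ t.2.1 = 0)
    (hA' : ∀ t ∈ T, Φ *ᵥ t.1 = 0 → Φ *ᵥ t.2.1 = 0 → t ∈ A)
    (hG : G = A.filter (fun t => ∀ t' ∈ A,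
      (t'.1 = t.1 ∨ t'.2.1 = t.2.1 ∨ t'.2.2 = t.2.2) → t' = t)) :
    (G.card : ℝ) ≤ (p : ℝ) ^
      ((1 - c) * (Module.finrank (ZMod p) (LinearMap.ker Φ.mulVecLin) : ℝ)) := by
  classical
  set K := LinearMap.ker Φ.mulVecLin with hK
  have hGsub : ∀ t ∈ G, t ∈ A ∧ ∀ t' ∈ A,
      (t'.1 = t.1 ∨ t'.2.1 = t.2.1 ∨ t'.2.2 = t.2.2) → t' = t := by
    intro t ht
    rw [hG] at ht
    exact Finset.mem_filter.mp ht
  have memK : ∀ t ∈ G, t.1 ∈ K ∧ t.2.1 ∈ K ∧ t.2.2 ∈ K := by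
    intro t ht
    have htA := (hGsub t ht).1
    obtain ⟨htT, hx, hy⟩ := hA t htA
    have hxK : t.1 ∈ K := by rw [hK, LinearMap.mem_ker, Matrix.mulVecLin_apply]; exact hx
    have hyK : t.2.1 ∈ K := by rw [hK, LinearMap.mem_ker, Matrix.mulVecLin_apply]; exact hy
    refine ⟨hxK, hyK, ?_⟩
    have hz : t.2.2 = -(t.1 + t.2.1) := by
      rw [eq_neg_iff_add_eq_zero, add_comm]; exact hT t htT
    rw [hz]
    exact K.neg_mem (K.add_mem hxK hyK)
  set D := Module.finrank (ZMod p) K with hD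
  let bK : Basis (Fin D) (ZMod p) K := Module.finBasis (ZMod p) K
  let eK : K ≃ₗ[ZMod p] (Fin D → ZMod p) := bK.equivFun
  let g : Fin G.card → {t // t ∈ G} := G.equivFin.symm
  have hginj : Function.Injective g := G.equivFin.symm.injective
  have hgG : ∀ i, (g i).1 ∈ G := fun i => (g i).2
  have hgA : ∀ i, (g i).1 ∈ A := fun i => (hGsub _ (hgG i)).1
  have hgT : ∀ i, (g i).1 ∈ T := fun i => (hA _ (hgA i)).1
  have hgood : ∀ i, ∀ t' ∈ A,
      (t'.1 = (g i).1.1 ∨ t'.2.1 = (g i).1.2.1 ∨ t'.2.2 = (g i).1.2.2) → t' = (g i).1 :=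
    fun i => (hGsub _ (hgG i)).2
  let aF : Fin G.card → (Fin D → ZMod p) := fun i => eK ⟨(g i).1.1, (memK _ (hgG i)).1⟩
  let bF : Fin G.card → (Fin D → ZMod p) := fun i => eK ⟨(g i).1.2.1, (memK _ (hgG i)).2.1⟩
  let cF : Fin G.card → (Fin D → ZMod p) := fun i => eK ⟨(g i).1.2.2, (memK _ (hgG i)).2.2⟩
  have key : ∀ i j k, aF i + bF j + cF k = 0 ↔ (i = j ∧ j = k) := by
    intro i j k
    constructor
    · intro h
      have h2 : (⟨(g i).1.1, (memK _ (hgG i)).1⟩ : K) + ⟨(g j).1.2.1, (memK _ (hgG j)).2.1⟩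
          + ⟨(g k).1.2.2, (memK _ (hgG k)).2.2⟩ = 0 := by
        apply eK.injective
        rw [map_add, map_add, map_zero]
        exact h
      have hsum : (g i).1.1 + (g j).1.2.1 + (g k).1.2.2 = 0 := by
        have := congrArg (Subtype.val) h2
        simpa using this
      set t'' : (Fin n → ZMod p) × (Fin n → ZMod p) × (Fin n → ZMod p) :=
        ((g i).1.1, (g j).1.2.1, (g k).1.2.2) with ht''
      have ht''T : t'' ∈ T := by
        apply hT' _ (hTXYZ _ (hgT i)).1 _ (hTXYZ _ (hgT j)).2.1 _ (hTXYZ _ (hgT k)).2.2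
        exact hsum
      have ht''A : t'' ∈ A := by
        apply hA' _ ht''T
        · have := (memK _ (hgG i)).1
          rwa [hK, LinearMap.mem_ker, Matrix.mulVecLin_apply] at this
        · have := (memK _ (hgG j)).2.1
          rwa [hK, LinearMap.mem_ker, Matrix.mulVecLin_apply] at this
      have hi : t'' = (g i).1 := hgood i t'' ht''A (Or.inl rfl)
      have hj : t'' = (g j).1 := hgood j t'' ht''A (Or.inr (Or.inl rfl))
      have hk : t'' = (g k).1 := hgood k t'' ht''A (Or.inr (Or.inr rfl))
      constructor
      · exact hginj (Subtype.ext (hi ▸ hj))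
      · exact hginj (Subtype.ext (hj ▸ hk))
    · rintro ⟨rfl, rfl⟩
      have hsum := hT _ (hgT i)
      show eK _ + eK _ + eK _ = 0
      rw [← map_add, ← map_add]
      convert map_zero eK
      apply Subtype.ext
      simpa using hsum
  exact hsf D G.card aF bF cF key

private theorem pow8' {p : ℕ} (hp2 : 2 ≤ p) {d m n : ℕ} (hd3 : 3 ≤ d) (hdm : n = d + m) :
    8 * ((p ^ m - 1) * (p ^ (m - 1)) ^ n) ≤ (p ^ n) ^ m := by
  rcases Nat.eq_zero_or_pos m with hm0 | hm1
  · simp [hm0]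
  · obtain ⟨m', rfl⟩ : ∃ m', m = m' + 1 := ⟨m - 1, by omega⟩
    subst hdm
    have e8 : 8 ≤ p ^ d := by
      calc (8 : ℕ) = 2 ^ 3 := by norm_num
        _ ≤ p ^ 3 := Nat.pow_le_pow_left hp2 3
        _ ≤ p ^ d := Nat.pow_le_pow_right (by omega) hd3
    calc 8 * ((p ^ (m' + 1) - 1) * (p ^ (m' + 1 - 1)) ^ (d + (m' + 1)))
        ≤ p ^ d * (p ^ (m' + 1) * (p ^ m') ^ (d + (m' + 1))) := by
          simp only [Nat.add_sub_cancel]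
          exact Nat.mul_le_mul e8 (Nat.mul_le_mul_right _ (Nat.sub_le _ _))
      _ = (p ^ (d + (m' + 1))) ^ (m' + 1) := by
          rw [← pow_mul, ← pow_add, ← pow_add, ← pow_mul]
          congr 1
          ring

private theorem swapCount' {α β : Type*} [Fintype α] (T : Finset β) (P : α → β → Prop)
    [∀ a b, Decidable (P a b)] :
    ∑ a : α, (T.filter (P a)).card = ∑ b ∈ T, (Finset.univ.filter (fun a => P a b)).card := by
  simp only [Finset.card_filter]
  rw [Finset.sum_comm]

end AuxStmt13

set_option maxHeartbeats 1600000 in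
/-- Lemma 2 of the paper: assuming the multicolored sum-free bound with exponent c,
if every point is in at most ρN triangles (and the independence/unique-plane
conditions hold), then the total number δN² of triangles satisfies
δ ≤ 125 p² ρ^{1+c}. -/
theorem stmt_13 (p n : ℕ) [Fact p.Prime] (c ρ δ : ℝ)
    (hc0 : 0 < c) (hc1 : c < 1)
    (hsf : ∀ d T : ℕ, ∀ a b e : Fin T → (Fin d → ZMod p),
      (∀ i j k, a i + b j + e k = 0 ↔ (i = j ∧ j = k)) →
      (T : ℝ) ≤ (p : ℝ) ^ ((1 - c) * (d : ℝ)))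
    (hρ0 : 0 < ρ) (hρ : ρ ≤ 1 / (5 * (p : ℝ) ^ 3))
    (X Y Z : Finset (Fin n → ZMod p))
    (h0 : (0 : Fin n → ZMod p) ∉ X ∪ Y ∪ Z)
    (hXY : Disjoint X Y) (hXZ : Disjoint X Z) (hYZ : Disjoint Y Z)
    (hind : ∀ u ∈ X ∪ Y ∪ Z, ∀ v ∈ X ∪ Y ∪ Z, u ≠ v →
      ∀ a b : ZMod p, a • u + b • v = 0 → a = 0 ∧ b = 0)
    (hplane : ∀ U : Submodule (ZMod p) (Fin n → ZMod p),
      Module.finrank (ZMod p) U = 2 →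
      ∀ x ∈ X, ∀ y ∈ Y, ∀ z ∈ Z, x + y + z = 0 → x ∈ U → y ∈ U → z ∈ U →
      ∀ x' ∈ X, ∀ y' ∈ Y, ∀ z' ∈ Z, x' + y' + z' = 0 → x' ∈ U → y' ∈ U → z' ∈ U →
        x = x' ∧ y = y' ∧ z = z')
    (hdegX : ∀ x ∈ X,
      ((Finset.filter (fun t => x + t.1 + t.2 = 0) (Y ×ˢ Z)).card : ℝ) ≤ ρ * (p : ℝ) ^ n)
    (hdegY : ∀ y ∈ Y,
      ((Finset.filter (fun t => t.1 + y + t.2 = 0) (X ×ˢ Z)).card : ℝ) ≤ ρ * (p : ℝ) ^ n)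
    (hdegZ : ∀ z ∈ Z,
      ((Finset.filter (fun t => t.1 + t.2 + z = 0) (X ×ˢ Y)).card : ℝ) ≤ ρ * (p : ℝ) ^ n)
    (hδ : ((Finset.filter (fun t => t.1 + t.2.1 + t.2.2 = 0) (X ×ˢ Y ×ˢ Z)).card : ℝ)
        = δ * ((p : ℝ) ^ n) ^ 2) :
    δ ≤ 125 * (p : ℝ) ^ 2 * ρ ^ ((1 : ℝ) + c) := by
  classical
  have hp2 : 2 ≤ p := (Fact.out : p.Prime).two_le
  have hQ1 : (1 : ℝ) < (p : ℝ) := by exact_mod_cast Nat.lt_of_lt_of_le one_lt_two hp2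
  have hQ0 : (0 : ℝ) < (p : ℝ) := lt_trans one_pos hQ1
  have hRHS0 : 0 ≤ 125 * (p : ℝ) ^ 2 * ρ ^ ((1 : ℝ) + c) := by positivity
  set T := Finset.filter (fun t => t.1 + t.2.1 + t.2.2 = 0) (X ×ˢ Y ×ˢ Z) with hTdef
  have hTmem : ∀ t ∈ T, (t.1 ∈ X ∧ t.2.1 ∈ Y ∧ t.2.2 ∈ Z) ∧ t.1 + t.2.1 + t.2.2 = 0 := by
    intro t ht
    rw [hTdef, Finset.mem_filter, Finset.mem_product, Finset.mem_product] at ht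
    exact ⟨⟨ht.1.1, ht.1.2.1, ht.1.2.2⟩, ht.2⟩
  have hT' : ∀ x ∈ X, ∀ y ∈ Y, ∀ z ∈ Z, x + y + z = 0 →
      ((x, y, z) : (Fin n → ZMod p) × (Fin n → ZMod p) × (Fin n → ZMod p)) ∈ T := by
    intro x hx y hy z hz hs
    rw [hTdef, Finset.mem_filter, Finset.mem_product, Finset.mem_product]
    exact ⟨⟨hx, hy, hz⟩, hs⟩
  have hδT : ((T.card : ℝ)) = δ * ((p : ℝ) ^ n) ^ 2 := hδ
  clear hδ
  -- choice of d
  obtain ⟨d, hd_lt, hd_min⟩ : ∃ d : ℕ, 1 / (5 * (p : ℝ)) < ρ * (p : ℝ) ^ d ∧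
      ∀ e : ℕ, e < d → ρ * (p : ℝ) ^ e ≤ 1 / (5 * (p : ℝ)) := by
    have hex : ∃ d : ℕ, 1 / (5 * (p : ℝ)) < ρ * (p : ℝ) ^ d := by
      obtain ⟨d, hd⟩ := pow_unbounded_of_one_lt (1 / (5 * (p : ℝ)) / ρ) hQ1
      rw [div_lt_iff₀ hρ0] at hd
      exact ⟨d, by linarith⟩
    refine ⟨Nat.find hex, Nat.find_spec hex, fun e he => ?_⟩
    have := Nat.find_min hex he
    linarith [not_lt.mp this]
  have hd3 : 3 ≤ d := by
    by_contra h
    push_neg at h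
    have h1 : ρ * (p : ℝ) ^ d ≤ ρ * (p : ℝ) ^ 2 := by
      apply mul_le_mul_of_nonneg_left _ hρ0.le
      exact pow_le_pow_right₀ hQ1.le (by omega)
    have h2 : ρ * (p : ℝ) ^ 2 ≤ (1 / (5 * (p : ℝ) ^ 3)) * (p : ℝ) ^ 2 := by
      apply mul_le_mul_of_nonneg_right hρ _
      positivity
    have h3 : (1 / (5 * (p : ℝ) ^ 3)) * (p : ℝ) ^ 2 = 1 / (5 * (p : ℝ)) := by
      field_simp
    linarith
  have hup : ρ * (p : ℝ) ^ d ≤ 1 / 5 := by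
    have h4 := hd_min (d - 1) (by omega)
    have h5 : ρ * (p : ℝ) ^ d = (ρ * (p : ℝ) ^ (d - 1)) * (p : ℝ) := by
      rw [mul_assoc, ← pow_succ]
      congr 2
      omega
    rw [h5]
    calc (ρ * (p : ℝ) ^ (d - 1)) * (p : ℝ) ≤ (1 / (5 * (p : ℝ))) * (p : ℝ) :=
          mul_le_mul_of_nonneg_right h4 hQ0.le
      _ = 1 / 5 := by field_simp
  by_cases hnd : n < d
  · -- degenerate case : no triangles at all
    have hsmall : ρ * (p : ℝ) ^ n < 1 := by
      have h1 := hd_min n hnd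
      have h2 : 1 / (5 * (p : ℝ)) < 1 := by
        rw [div_lt_one (by positivity)]
        nlinarith
      linarith
    have hTe : T = ∅ := by
      by_contra h
      obtain ⟨t, ht⟩ := Finset.nonempty_iff_ne_empty.mpr h
      obtain ⟨⟨hx, hy, hz⟩, hs⟩ := hTmem t ht
      have hmem : (t.2.1, t.2.2) ∈ (Y ×ˢ Z).filter (fun s => t.1 + s.1 + s.2 = 0) := by
        rw [Finset.mem_filter, Finset.mem_product]
        exact ⟨⟨hy, hz⟩, hs⟩
      have h1 : (1 : ℝ) ≤ ((Y ×ˢ Z).filter (fun s => t.1 + s.1 + s.2 = 0)).card := by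
        exact_mod_cast Finset.card_pos.mpr ⟨_, hmem⟩
      linarith [hdegX t.1 hx]
    have hz : δ * ((p : ℝ) ^ n) ^ 2 = 0 := by rw [← hδT, hTe]; simp
    have hN2 : (0 : ℝ) < ((p : ℝ) ^ n) ^ 2 := by positivity
    have hδ0 : δ = 0 := by
      rcases mul_eq_zero.mp hz with h | h
      · exact h
      · exact absurd h hN2.ne'
    rw [hδ0]; exact hRHS0
  · push_neg at hnd
    set m := n - d with hm
    have hmn : m ≤ n := by omega
    have hnm : n - m = d := by omega
    have liT : ∀ t ∈ T, LinearIndependent (ZMod p) ![t.1, t.2.1] := by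
      intro t ht
      obtain ⟨⟨hx, hy, _⟩, _⟩ := hTmem t ht
      have hxy : t.1 ≠ t.2.1 := by
        intro h
        exact (Finset.disjoint_left.mp hXY hx) (h ▸ hy)
      exact LinearIndependent.pair_iff.mpr
        (hind t.1 (Finset.mem_union_left _ (Finset.mem_union_left _ hx))
          t.2.1 (Finset.mem_union_left _ (Finset.mem_union_right _ hy)) hxy)
    set MS := Matrix (Fin m) (Fin n) (ZMod p) with hMS
    set Acal : MS → Finset ((Fin n → ZMod p) × (Fin n → ZMod p) × (Fin n → ZMod p)) :=
      fun Φ => T.filter (fun t => Φ *ᵥ t.1 = 0 ∧ Φ *ᵥ t.2.1 = 0) with hAcal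
    set Gcal : MS → Finset ((Fin n → ZMod p) × (Fin n → ZMod p) × (Fin n → ZMod p)) :=
      fun Φ => (Acal Φ).filter (fun t => ∀ t' ∈ Acal Φ,
        (t'.1 = t.1 ∨ t'.2.1 = t.2.1 ∨ t'.2.2 = t.2.2) → t' = t) with hGcal
    set Bcal : MS → Finset ((Fin n → ZMod p) × (Fin n → ZMod p) × (Fin n → ZMod p)) :=
      fun Φ => (Acal Φ).filter (fun t => ∃ t' ∈ Acal Φ,
        (t'.1 = t.1 ∨ t'.2.1 = t.2.1 ∨ t'.2.2 = t.2.2) ∧ t' ≠ t) with hBcal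
    set Pairs : Finset (((Fin n → ZMod p) × (Fin n → ZMod p) × (Fin n → ZMod p)) ×
        ((Fin n → ZMod p) × (Fin n → ZMod p) × (Fin n → ZMod p))) :=
      (T ×ˢ T).filter (fun q =>
        (q.2.1 = q.1.1 ∨ q.2.2.1 = q.1.2.1 ∨ q.2.2.2 = q.1.2.2) ∧ q.2 ≠ q.1) with hPairs
    have hAmem : ∀ (Φ : MS), ∀ t, t ∈ Acal Φ ↔ t ∈ T ∧ Φ *ᵥ t.1 = 0 ∧ Φ *ᵥ t.2.1 = 0 := by
      intro Φ t
      simp only [hAcal]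
      exact Finset.mem_filter
    -- counting: A
    have hcountA : ∀ t ∈ T,
        (Finset.univ.filter (fun Φ : MS => Φ *ᵥ t.1 = 0 ∧ Φ *ᵥ t.2.1 = 0)).card
          = (p ^ (n - 2)) ^ m := by
      intro t ht
      have heq : (Finset.univ.filter (fun Φ : MS => Φ *ᵥ t.1 = 0 ∧ Φ *ᵥ t.2.1 = 0))
          = (Finset.univ.filter (fun Φ : MS => ∀ i, Φ *ᵥ (![t.1, t.2.1]) i = 0)) := by
        apply Finset.filter_congr
        intro Φ _
        rw [Fin.forall_fin_two]
        simp
      rw [heq, ← Fintype.card_subtype, ← Nat.card_eq_fintype_card]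
      exact countMat' ![t.1, t.2.1] (liT t ht)
    have hsumA : ∑ Φ : MS, (Acal Φ).card = T.card * (p ^ (n - 2)) ^ m := by
      rw [hAcal]
      rw [swapCount' T (fun (Φ : MS) t => Φ *ᵥ t.1 = 0 ∧ Φ *ᵥ t.2.1 = 0)]
      rw [Finset.sum_congr rfl hcountA, Finset.sum_const, smul_eq_mul]
    -- A ≤ G + B
    have hAGB : ∀ Φ : MS, (Acal Φ).card ≤ (Gcal Φ).card + (Bcal Φ).card := by
      intro Φ
      have hsub : Acal Φ ⊆ Gcal Φ ∪ Bcal Φ := by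
        intro t ht
        by_cases h : ∀ t' ∈ Acal Φ, (t'.1 = t.1 ∨ t'.2.1 = t.2.1 ∨ t'.2.2 = t.2.2) → t' = t
        · exact Finset.mem_union_left _ (by rw [hGcal]; exact Finset.mem_filter.mpr ⟨ht, h⟩)
        · push_neg at h
          exact Finset.mem_union_right _ (by rw [hBcal]; exact Finset.mem_filter.mpr ⟨ht, h⟩)
      exact (Finset.card_le_card hsub).trans (Finset.card_union_le _ _)
    -- good bound
    have hGΦ : ∀ Φ : MS, ((Gcal Φ).card : ℝ) ≤ (p : ℝ) ^ ((1 - c) * (d : ℝ)) *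
        (Nat.card (LinearMap.ker Φᵀ.mulVecLin) : ℝ) := by
      intro Φ
      have hgb := goodBound' hsf X Y Z Φ T (Acal Φ) (Gcal Φ)
        (fun t ht => (hTmem t ht).2) (fun t ht => (hTmem t ht).1) hT'
        (fun t ht => (hAmem Φ t).mp ht)
        (fun t ht h1 h2 => (hAmem Φ t).mpr ⟨ht, h1, h2⟩) (by rw [hGcal])
      set s := Module.finrank (ZMod p) (LinearMap.ker Φᵀ.mulVecLin) with hs
      have hD : Module.finrank (ZMod p) (LinearMap.ker Φ.mulVecLin) = d + s := by
        rw [kerRel' hmn Φ, hnm]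
      rw [hD] at hgb
      have h1 : (1 - c) * ((d + s : ℕ) : ℝ) ≤ (1 - c) * (d : ℝ) + (s : ℕ) := by
        push_cast
        nlinarith [Nat.cast_nonneg (α := ℝ) s]
      calc ((Gcal Φ).card : ℝ) ≤ (p : ℝ) ^ ((1 - c) * ((d + s : ℕ) : ℝ)) := hgb
        _ ≤ (p : ℝ) ^ ((1 - c) * (d : ℝ) + (s : ℝ)) :=
            Real.rpow_le_rpow_of_exponent_le hQ1.le h1
        _ = (p : ℝ) ^ ((1 - c) * (d : ℝ)) * (p : ℝ) ^ (s : ℝ) := Real.rpow_add hQ0 _ _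
        _ = (p : ℝ) ^ ((1 - c) * (d : ℝ)) * ((p ^ s : ℕ) : ℝ) := by
            rw [Real.rpow_natCast]; push_cast; ring
        _ = (p : ℝ) ^ ((1 - c) * (d : ℝ)) * (Nat.card (LinearMap.ker Φᵀ.mulVecLin) : ℝ) := by
            rw [cardSub']
    have hsumKer : ∑ Φ : MS, Nat.card (LinearMap.ker Φᵀ.mulVecLin)
        ≤ (p ^ n) ^ m + (p ^ m - 1) * (p ^ (m - 1)) ^ n := by
      have hker : ∀ Φ : MS, Nat.card (LinearMap.ker Φᵀ.mulVecLin)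
          = (Finset.univ.filter (fun lam : Fin m → ZMod p => Φᵀ *ᵥ lam = 0)).card := by
        intro Φ
        rw [← Fintype.card_subtype, ← Nat.card_eq_fintype_card]
        apply Nat.card_congr
        apply Equiv.subtypeEquivRight
        intro lam
        simp only [LinearMap.mem_ker, Matrix.mulVecLin_apply, Matrix.mulVec_transpose]
      have hcountT : ∀ lam : Fin m → ZMod p, lam ≠ 0 →
          (Finset.univ.filter (fun Φ : MS => Φᵀ *ᵥ lam = 0)).card = (p ^ (m - 1)) ^ n := by
        intro lam hlam
        rw [← Fintype.card_subtype, ← Nat.card_eq_fintype_card]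
        have e : {Φ : MS // Φᵀ *ᵥ lam = 0} ≃
            {Ψ : Matrix (Fin n) (Fin m) (ZMod p) // ∀ i, Ψ *ᵥ (![lam]) i = 0} :=
          { toFun := fun Φ => ⟨Φ.1ᵀ, fun i => by
              have hi : (![lam]) i = lam := by fin_cases i; rfl
              rw [hi]; exact Φ.2⟩
            invFun := fun Ψ => ⟨Ψ.1ᵀ, by
              have h2 := Ψ.2 0
              rw [Matrix.transpose_transpose]
              simpa using h2⟩
            left_inv := fun Φ => Subtype.ext (Matrix.transpose_transpose _)
            right_inv := fun Ψ => Subtype.ext (Matrix.transpose_transpose _) }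
        rw [Nat.card_congr e]
        exact countMat' ![lam] (linearIndependent_unique_iff.mpr (by simpa using hlam))
      have hcardMS : Fintype.card MS = (p ^ n) ^ m := by
        show Fintype.card (Fin m → Fin n → ZMod p) = (p ^ n) ^ m
        rw [Fintype.card_fun, Fintype.card_fun]
        simp [ZMod.card]
      have hcardV : Fintype.card (Fin m → ZMod p) = p ^ m := by
        rw [Fintype.card_fun]
        simp [ZMod.card]
      calc ∑ Φ : MS, Nat.card (LinearMap.ker Φᵀ.mulVecLin)
          = ∑ Φ : MS,
            (Finset.univ.filter (fun lam : Fin m → ZMod p => Φᵀ *ᵥ lam = 0)).card :=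
            Finset.sum_congr rfl (fun Φ _ => hker Φ)
        _ = ∑ lam ∈ (Finset.univ : Finset (Fin m → ZMod p)),
            (Finset.univ.filter (fun Φ : MS => Φᵀ *ᵥ lam = 0)).card :=
            swapCount' Finset.univ (fun (Φ : MS) (lam : Fin m → ZMod p) => Φᵀ *ᵥ lam = 0)
        _ = (∑ lam ∈ (Finset.univ : Finset (Fin m → ZMod p)) \ {0},
              (Finset.univ.filter (fun Φ : MS => Φᵀ *ᵥ lam = 0)).card)
            + (Finset.univ.filter (fun Φ : MS => Φᵀ *ᵥ (0 : Fin m → ZMod p) = 0)).card :=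
            Finset.sum_eq_sum_sdiff_singleton_add (Finset.mem_univ _) _
        _ = (∑ _lam ∈ (Finset.univ : Finset (Fin m → ZMod p)) \ {0}, (p ^ (m - 1)) ^ n)
            + (Finset.univ : Finset MS).card := by
            congr 1
            · apply Finset.sum_congr rfl
              intro lam hlam
              rw [Finset.mem_sdiff, Finset.mem_singleton] at hlam
              exact hcountT lam hlam.2
            · congr 1
              apply Finset.filter_true_of_mem
              intro Φ _
              exact Matrix.mulVec_zero _
        _ = (p ^ m - 1) * (p ^ (m - 1)) ^ n + (p ^ n) ^ m := by
            rw [Finset.sum_const, smul_eq_mul, Finset.card_sdiff_of_subset (by simp),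
              Finset.card_singleton, Finset.card_univ, Finset.card_univ, hcardMS, hcardV]
        _ ≤ (p ^ n) ^ m + (p ^ m - 1) * (p ^ (m - 1)) ^ n := by omega
    have hBP : ∀ Φ : MS, (Bcal Φ).card
        ≤ (Pairs.filter (fun q => q.1 ∈ Acal Φ ∧ q.2 ∈ Acal Φ)).card := by
      intro Φ
      apply Finset.card_le_card_of_injOn (fun t =>
        (t, if h : ∃ t' ∈ Acal Φ, (t'.1 = t.1 ∨ t'.2.1 = t.2.1 ∨ t'.2.2 = t.2.2) ∧ t' ≠ t
            then h.choose else t))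
      · intro t ht
        rw [Finset.mem_coe, hBcal, Finset.mem_filter] at ht
        obtain ⟨htA, hex⟩ := ht
        beta_reduce
        rw [dif_pos hex]
        obtain ⟨hwA, hshare, hwne⟩ := hex.choose_spec
        rw [Finset.mem_coe, Finset.mem_filter]
        refine ⟨?_, htA, hwA⟩
        rw [hPairs, Finset.mem_filter, Finset.mem_product]
        exact ⟨⟨((hAmem Φ t).mp htA).1, ((hAmem Φ _).mp hwA).1⟩, hshare, hwne⟩
      · intro a _ b _ h
        exact (Prod.ext_iff.mp h).1
    have hq3 : ∀ q ∈ Pairs,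
        (Finset.univ.filter (fun Φ : MS => q.1 ∈ Acal Φ ∧ q.2 ∈ Acal Φ)).card
          ≤ (p ^ (n - 3)) ^ m := by
      intro q hq
      rw [hPairs, Finset.mem_filter, Finset.mem_product] at hq
      obtain ⟨⟨hq1T, hq2T⟩, hshare, hne⟩ := hq
      have li2 := liT q.1 hq1T
      set U := Submodule.span (ZMod p) (Set.range ![q.1.1, q.1.2.1]) with hU
      have hU2 : Module.finrank (ZMod p) U = 2 := by
        rw [hU, finrank_span_eq_card li2]
        simp
      have hxU : q.1.1 ∈ U := Submodule.subset_span ⟨0, rfl⟩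
      have hyU : q.1.2.1 ∈ U := Submodule.subset_span ⟨1, rfl⟩
      obtain ⟨⟨hX1, hY1, hZ1⟩, hs1⟩ := hTmem q.1 hq1T
      obtain ⟨⟨hX2, hY2, hZ2⟩, hs2⟩ := hTmem q.2 hq2T
      have hzU : q.1.2.2 ∈ U := by
        have hz : q.1.2.2 = -(q.1.1 + q.1.2.1) := by
          rw [eq_neg_iff_add_eq_zero, add_comm]; exact hs1
        rw [hz]; exact U.neg_mem (U.add_mem hxU hyU)
      have hnotall : ¬(q.2.1 ∈ U ∧ q.2.2.1 ∈ U ∧ q.2.2.2 ∈ U) := by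
        rintro ⟨h1, h2, h3⟩
        obtain ⟨e1, e2, e3⟩ := hplane U hU2 q.1.1 hX1 q.1.2.1 hY1 q.1.2.2 hZ1 hs1 hxU hyU hzU
          q.2.1 hX2 q.2.2.1 hY2 q.2.2.2 hZ2 hs2 h1 h2 h3
        exact hne (Prod.ext e1.symm (Prod.ext e2.symm e3.symm))
      have hescape : ∃ u, u ∉ U ∧ ∀ Φ : MS, q.2 ∈ Acal Φ → Φ *ᵥ u = 0 := by
        by_cases h1 : q.2.1 ∈ U
        · by_cases h2 : q.2.2.1 ∈ U
          · refine ⟨q.2.2.2, fun h3 => hnotall ⟨h1, h2, h3⟩, ?_⟩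
            intro Φ hA2
            obtain ⟨-, k1, k2⟩ := (hAmem Φ q.2).mp hA2
            have hz2 : q.2.2.2 = -(q.2.1 + q.2.2.1) := by
              rw [eq_neg_iff_add_eq_zero, add_comm]; exact hs2
            rw [hz2, Matrix.mulVec_neg, Matrix.mulVec_add, k1, k2]
            simp
          · exact ⟨q.2.2.1, h2, fun Φ hA2 => ((hAmem Φ q.2).mp hA2).2.2⟩
        · exact ⟨q.2.1, h1, fun Φ hA2 => ((hAmem Φ q.2).mp hA2).2.1⟩
      obtain ⟨u, huU, hukill⟩ := hescape
      set v3 : Fin 3 → (Fin n → ZMod p) := Fin.cons u ![q.1.1, q.1.2.1] with hv3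
      have li3 : LinearIndependent (ZMod p) v3 :=
        linearIndependent_fin_cons.mpr ⟨li2, by rwa [← hU]⟩
      have hsubset : Finset.univ.filter (fun Φ : MS => q.1 ∈ Acal Φ ∧ q.2 ∈ Acal Φ)
          ⊆ Finset.univ.filter
            (fun Φ : MS => ∀ i, Φ *ᵥ v3 i = 0) := by
        intro Φ hΦ
        rw [Finset.mem_filter] at hΦ ⊢
        obtain ⟨-, hA1, hA2⟩ := hΦ
        refine ⟨Finset.mem_univ _, ?_⟩
        intro i
        obtain ⟨-, k1, k2⟩ := (hAmem Φ q.1).mp hA1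
        rw [hv3]
        refine Fin.cases ?_ ?_ i
        · simpa using hukill Φ hA2
        · intro j
          fin_cases j
          · simpa using k1
          · simpa using k2
      calc (Finset.univ.filter (fun Φ : MS => q.1 ∈ Acal Φ ∧ q.2 ∈ Acal Φ)).card
          ≤ (Finset.univ.filter
            (fun Φ : MS => ∀ i, Φ *ᵥ v3 i = 0)).card :=
            Finset.card_le_card hsubset
        _ = (p ^ (n - 3)) ^ m := by
            rw [← Fintype.card_subtype, ← Nat.card_eq_fintype_card]
            exact countMat' _ li3
    have hsumB : ∑ Φ : MS, (Bcal Φ).card ≤ Pairs.card * (p ^ (n - 3)) ^ m := by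
      calc ∑ Φ : MS, (Bcal Φ).card
          ≤ ∑ Φ : MS, (Pairs.filter (fun q => q.1 ∈ Acal Φ ∧ q.2 ∈ Acal Φ)).card :=
            Finset.sum_le_sum (fun Φ _ => hBP Φ)
        _ = ∑ q ∈ Pairs,
            (Finset.univ.filter (fun Φ : MS => q.1 ∈ Acal Φ ∧ q.2 ∈ Acal Φ)).card :=
            swapCount' Pairs _
        _ ≤ ∑ _q ∈ Pairs, (p ^ (n - 3)) ^ m := Finset.sum_le_sum hq3
        _ = Pairs.card * (p ^ (n - 3)) ^ m := by rw [Finset.sum_const, smul_eq_mul]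
    have hPairsCard : (Pairs.card : ℝ) ≤ (T.card : ℝ) * (3 * (ρ * (p : ℝ) ^ n)) := by
      have hfib : Pairs.card = ∑ t ∈ T, (Pairs.filter (fun q => q.1 = t)).card := by
        apply Finset.card_eq_sum_card_fiberwise
        intro q hq
        rw [Finset.mem_coe, hPairs, Finset.mem_filter, Finset.mem_product] at hq
        exact hq.1.1
      have hperT : ∀ t ∈ T,
          ((Pairs.filter (fun q => q.1 = t)).card : ℝ) ≤ 3 * (ρ * (p : ℝ) ^ n) := by
        intro t ht
        obtain ⟨⟨hx, hy, hz⟩, hs⟩ := hTmem t ht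
        set F1 := T.filter (fun t' => t'.1 = t.1) with hF1
        set F2 := T.filter (fun t' => t'.2.1 = t.2.1) with hF2
        set F3 := T.filter (fun t' => t'.2.2 = t.2.2) with hF3
        have hstep : (Pairs.filter (fun q => q.1 = t)).card ≤ (F1 ∪ F2 ∪ F3).card := by
          apply Finset.card_le_card_of_injOn (fun q => q.2)
          · intro q hq2
            rw [Finset.mem_coe, Finset.mem_filter] at hq2
            obtain ⟨hqP, hqt⟩ := hq2
            rw [hPairs, Finset.mem_filter, Finset.mem_product] at hqP
            obtain ⟨⟨-, hq2T⟩, hsh, -⟩ := hqP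
            rw [hqt] at hsh
            rcases hsh with h | h | h
            · exact Finset.mem_union_left _
                (Finset.mem_union_left _ (Finset.mem_filter.mpr ⟨hq2T, h⟩))
            · exact Finset.mem_union_left _
                (Finset.mem_union_right _ (Finset.mem_filter.mpr ⟨hq2T, h⟩))
            · exact Finset.mem_union_right _ (Finset.mem_filter.mpr ⟨hq2T, h⟩)
          · intro a ha b hb hab
            rw [Finset.mem_coe, Finset.mem_filter] at ha hb
            exact Prod.ext (ha.2.trans hb.2.symm) hab
        have hcF1 : (F1.card : ℝ) ≤ ρ * (p : ℝ) ^ n := by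
          refine le_trans ?_ (hdegX t.1 hx)
          have hinj : F1.card ≤ ((Y ×ˢ Z).filter (fun s => t.1 + s.1 + s.2 = 0)).card := by
            apply Finset.card_le_card_of_injOn (fun t' => (t'.2.1, t'.2.2))
            · intro t' ht'
              rw [Finset.mem_coe, hF1, Finset.mem_filter] at ht'
              obtain ⟨ht'T, h1⟩ := ht'
              obtain ⟨⟨_, hy', hz'⟩, hs'⟩ := hTmem t' ht'T
              rw [Finset.mem_coe, Finset.mem_filter, Finset.mem_product]
              exact ⟨⟨hy', hz'⟩, by rw [← h1]; exact hs'⟩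
            · intro a ha b hb hab
              rw [Finset.mem_coe, hF1, Finset.mem_filter] at ha hb
              obtain ⟨h1, h2⟩ := Prod.ext_iff.mp hab
              exact Prod.ext (ha.2.trans hb.2.symm) (Prod.ext h1 h2)
          exact_mod_cast hinj
        have hcF2 : (F2.card : ℝ) ≤ ρ * (p : ℝ) ^ n := by
          refine le_trans ?_ (hdegY t.2.1 hy)
          have hinj : F2.card ≤ ((X ×ˢ Z).filter (fun s => s.1 + t.2.1 + s.2 = 0)).card := by
            apply Finset.card_le_card_of_injOn (fun t' => (t'.1, t'.2.2))
            · intro t' ht'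
              rw [Finset.mem_coe, hF2, Finset.mem_filter] at ht'
              obtain ⟨ht'T, h1⟩ := ht'
              obtain ⟨⟨hx', _, hz'⟩, hs'⟩ := hTmem t' ht'T
              rw [Finset.mem_coe, Finset.mem_filter, Finset.mem_product]
              exact ⟨⟨hx', hz'⟩, by rw [← h1]; exact hs'⟩
            · intro a ha b hb hab
              rw [Finset.mem_coe, hF2, Finset.mem_filter] at ha hb
              obtain ⟨h1, h2⟩ := Prod.ext_iff.mp hab
              exact Prod.ext h1 (Prod.ext (ha.2.trans hb.2.symm) h2)
          exact_mod_cast hinj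
        have hcF3 : (F3.card : ℝ) ≤ ρ * (p : ℝ) ^ n := by
          refine le_trans ?_ (hdegZ t.2.2 hz)
          have hinj : F3.card ≤ ((X ×ˢ Y).filter (fun s => s.1 + s.2 + t.2.2 = 0)).card := by
            apply Finset.card_le_card_of_injOn (fun t' => (t'.1, t'.2.1))
            · intro t' ht'
              rw [Finset.mem_coe, hF3, Finset.mem_filter] at ht'
              obtain ⟨ht'T, h1⟩ := ht'
              obtain ⟨⟨hx', hy', _⟩, hs'⟩ := hTmem t' ht'T
              rw [Finset.mem_coe, Finset.mem_filter, Finset.mem_product]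
              exact ⟨⟨hx', hy'⟩, by rw [← h1]; exact hs'⟩
            · intro a ha b hb hab
              rw [Finset.mem_coe, hF3, Finset.mem_filter] at ha hb
              obtain ⟨h1, h2⟩ := Prod.ext_iff.mp hab
              exact Prod.ext h1 (Prod.ext h2 (ha.2.trans hb.2.symm))
          exact_mod_cast hinj
        have hun : ((F1 ∪ F2 ∪ F3).card : ℝ) ≤ (F1.card : ℝ) + F2.card + F3.card := by
          have h1 := Finset.card_union_le (F1 ∪ F2) F3
          have h2 := Finset.card_union_le F1 F2
          push_cast
          exact_mod_cast le_trans h1 (by omega)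
        have := (Nat.cast_le (α := ℝ)).mpr hstep
        linarith
      calc (Pairs.card : ℝ) = ∑ t ∈ T, ((Pairs.filter (fun q => q.1 = t)).card : ℝ) := by
            rw [hfib]; push_cast; ring
        _ ≤ ∑ _t ∈ T, 3 * (ρ * (p : ℝ) ^ n) := Finset.sum_le_sum hperT
        _ = (T.card : ℝ) * (3 * (ρ * (p : ℝ) ^ n)) := by
            rw [Finset.sum_const, nsmul_eq_mul]
    -- final combination
    have hdm : n = d + m := by omega
    have hTc0 : (0 : ℝ) ≤ (T.card : ℝ) := Nat.cast_nonneg _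
    have hK2pos : (0 : ℝ) < ((p : ℝ) ^ (n - 2)) ^ m := by positivity
    have hK3pos : (0 : ℝ) < ((p : ℝ) ^ (n - 3)) ^ m := by positivity
    have hTK : ((T.card : ℝ)) * ((p : ℝ) ^ (n - 2)) ^ m = ∑ Φ : MS, ((Acal Φ).card : ℝ) := by
      rw [← Nat.cast_sum, hsumA]
      push_cast
      ring
    have hGB : ∑ Φ : MS, ((Acal Φ).card : ℝ)
        ≤ (∑ Φ : MS, ((Gcal Φ).card : ℝ)) + ∑ Φ : MS, ((Bcal Φ).card : ℝ) := by
      rw [← Finset.sum_add_distrib]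
      apply Finset.sum_le_sum
      intro Φ _
      exact_mod_cast hAGB Φ
    have hGtot : ∑ Φ : MS, ((Gcal Φ).card : ℝ)
        ≤ (p : ℝ) ^ ((1 - c) * (d : ℝ)) * ((9 : ℝ) / 8 * ((p : ℝ) ^ n) ^ m) := by
      calc ∑ Φ : MS, ((Gcal Φ).card : ℝ)
          ≤ ∑ Φ : MS, ((p : ℝ) ^ ((1 - c) * (d : ℝ)) *
              (Nat.card (LinearMap.ker Φᵀ.mulVecLin) : ℝ)) :=
            Finset.sum_le_sum (fun Φ _ => hGΦ Φ)
        _ = (p : ℝ) ^ ((1 - c) * (d : ℝ)) *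
            ∑ Φ : MS, (Nat.card (LinearMap.ker Φᵀ.mulVecLin) : ℝ) := by
            rw [Finset.mul_sum]
        _ ≤ (p : ℝ) ^ ((1 - c) * (d : ℝ)) * ((9 : ℝ) / 8 * ((p : ℝ) ^ n) ^ m) := by
            apply mul_le_mul_of_nonneg_left _ (Real.rpow_nonneg hQ0.le _)
            have hcast : ∑ Φ : MS, (Nat.card (LinearMap.ker Φᵀ.mulVecLin) : ℝ)
                ≤ (((p ^ n) ^ m + (p ^ m - 1) * (p ^ (m - 1)) ^ n : ℕ) : ℝ) := by
              rw [← Nat.cast_sum]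
              exact_mod_cast hsumKer
            refine le_trans hcast ?_
            have h8 := pow8' hp2 hd3 hdm (p := p)
            have h8r : (8 : ℝ) * (((p ^ m - 1) * (p ^ (m - 1)) ^ n : ℕ) : ℝ)
                ≤ ((p : ℝ) ^ n) ^ m := by
              have := (Nat.cast_le (α := ℝ)).mpr h8
              push_cast at this ⊢
              convert this using 2 <;> push_cast <;> ring
            push_cast at h8r ⊢
            linarith
    have hBtot : ∑ Φ : MS, ((Bcal Φ).card : ℝ)
        ≤ (T.card : ℝ) * (3 * (ρ * (p : ℝ) ^ n)) * ((p : ℝ) ^ (n - 3)) ^ m := by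
      calc ∑ Φ : MS, ((Bcal Φ).card : ℝ)
          ≤ ((Pairs.card * (p ^ (n - 3)) ^ m : ℕ) : ℝ) := by
            rw [← Nat.cast_sum]
            exact_mod_cast hsumB
        _ = (Pairs.card : ℝ) * ((p : ℝ) ^ (n - 3)) ^ m := by push_cast; ring
        _ ≤ (T.card : ℝ) * (3 * (ρ * (p : ℝ) ^ n)) * ((p : ℝ) ^ (n - 3)) ^ m :=
            mul_le_mul_of_nonneg_right hPairsCard hK3pos.le
    have hMain : (T.card : ℝ) * ((p : ℝ) ^ (n - 2)) ^ m
        ≤ (p : ℝ) ^ ((1 - c) * (d : ℝ)) * ((9 : ℝ) / 8 * ((p : ℝ) ^ n) ^ m)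
          + (T.card : ℝ) * (3 * (ρ * (p : ℝ) ^ n)) * ((p : ℝ) ^ (n - 3)) ^ m := by
      rw [hTK]
      linarith [hGB, hGtot, hBtot]
    have hid1 : (p : ℝ) ^ n = (p : ℝ) ^ d * (p : ℝ) ^ m := by
      rw [← pow_add]
      congr 1
    have hid2 : (p : ℝ) ^ m * ((p : ℝ) ^ (n - 3)) ^ m = ((p : ℝ) ^ (n - 2)) ^ m := by
      rw [← mul_pow]
      congr 1
      rw [← pow_succ']
      congr 1
      omega
    have hid3 : ((p : ℝ) ^ n) ^ m = ((p : ℝ) ^ (n - 2)) ^ m * (((p : ℝ) ^ m) ^ 2) := by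
      rw [show (p : ℝ) ^ n = (p : ℝ) ^ (n - 2) * (p : ℝ) ^ 2 by
        rw [← pow_add]; congr 1; omega]
      rw [mul_pow]
      congr 1
      exact pow_right_comm _ _ _
    have hterm : (T.card : ℝ) * (3 * (ρ * (p : ℝ) ^ n)) * ((p : ℝ) ^ (n - 3)) ^ m
        ≤ (3 / 5) * ((T.card : ℝ) * ((p : ℝ) ^ (n - 2)) ^ m) := by
      have hre : (3 * (ρ * (p : ℝ) ^ n)) * ((p : ℝ) ^ (n - 3)) ^ m
          = (3 * (ρ * (p : ℝ) ^ d)) * ((p : ℝ) ^ (n - 2)) ^ m := by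
        rw [hid1, ← hid2]
        ring
      rw [mul_assoc, hre]
      have h35 : 3 * (ρ * (p : ℝ) ^ d) ≤ 3 / 5 := by linarith
      calc (T.card : ℝ) * ((3 * (ρ * (p : ℝ) ^ d)) * ((p : ℝ) ^ (n - 2)) ^ m)
          ≤ (T.card : ℝ) * ((3 / 5) * ((p : ℝ) ^ (n - 2)) ^ m) :=
            mul_le_mul_of_nonneg_left
              (mul_le_mul_of_nonneg_right h35 hK2pos.le) hTc0
        _ = (3 / 5) * ((T.card : ℝ) * ((p : ℝ) ^ (n - 2)) ^ m) := by ring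
    have hTcle : (T.card : ℝ)
        ≤ (45 / 16) * ((p : ℝ) ^ ((1 - c) * (d : ℝ)) * (((p : ℝ) ^ m) ^ 2)) := by
      have h1 : ((2 / 5) * (T.card : ℝ)) * ((p : ℝ) ^ (n - 2)) ^ m
          ≤ ((45 : ℝ) / 16 * ((p : ℝ) ^ ((1 - c) * (d : ℝ)) * (((p : ℝ) ^ m) ^ 2)) * (2 / 5))
              * ((p : ℝ) ^ (n - 2)) ^ m := by
        have hM := hMain
        rw [hid3] at hM
        linarith [hterm]
      have h2 := le_of_mul_le_mul_right h1 hK2pos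
      linarith [h2]
    have hδd : δ * (((p : ℝ) ^ d) ^ 2)
        ≤ (45 / 16) * (p : ℝ) ^ ((1 - c) * (d : ℝ)) := by
      have hsq : ((p : ℝ) ^ n) ^ 2 = ((p : ℝ) ^ d) ^ 2 * (((p : ℝ) ^ m) ^ 2) := by
        rw [hid1, mul_pow]
      have hQm2pos : (0 : ℝ) < ((p : ℝ) ^ m) ^ 2 := by positivity
      have h1 : (δ * (((p : ℝ) ^ d) ^ 2)) * (((p : ℝ) ^ m) ^ 2)
          ≤ ((45 / 16) * (p : ℝ) ^ ((1 - c) * (d : ℝ))) * (((p : ℝ) ^ m) ^ 2) := by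
        have hT2 := hTcle
        rw [hδT, hsq] at hT2
        linarith [hT2]
      exact le_of_mul_le_mul_right h1 hQm2pos
    -- rpow endgame
    have hQdpos : (0 : ℝ) < (p : ℝ) ^ d := by positivity
    have hδle2 : δ ≤ (45 / 16) *
        ((p : ℝ) ^ ((1 - c) * (d : ℝ)) / ((p : ℝ) ^ d) ^ 2) := by
      rw [mul_div_assoc', le_div_iff₀ (by positivity : (0:ℝ) < ((p : ℝ) ^ d) ^ 2)]
      linarith [hδd]
    have e1 : (p : ℝ) ^ ((1 - c) * (d : ℝ)) / ((p : ℝ) ^ d) ^ 2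
        = ((p : ℝ) ^ (-(d : ℝ))) ^ ((1 : ℝ) + c) := by
      rw [← pow_mul, ← Real.rpow_natCast (p : ℝ) (d * 2), ← Real.rpow_sub hQ0,
        ← Real.rpow_mul hQ0.le]
      congr 1
      push_cast
      ring
    have e2 : (p : ℝ) ^ (-(d : ℝ)) = 1 / ((p : ℝ) ^ d) := by
      rw [Real.rpow_neg hQ0.le, Real.rpow_natCast, one_div]
    have hinvle : 1 / ((p : ℝ) ^ d) ≤ 5 * (p : ℝ) * ρ := by
      rw [div_le_iff₀ hQdpos]
      rw [div_lt_iff₀ (by positivity : (0:ℝ) < 5 * (p : ℝ))] at hd_lt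
      nlinarith [hd_lt]
    have hmono : ((p : ℝ) ^ (-(d : ℝ))) ^ ((1 : ℝ) + c)
        ≤ (5 * (p : ℝ) * ρ) ^ ((1 : ℝ) + c) := by
      rw [e2]
      exact Real.rpow_le_rpow (by positivity) hinvle (by linarith)
    have hsplit : (5 * (p : ℝ) * ρ) ^ ((1 : ℝ) + c)
        = (5 * (p : ℝ)) ^ ((1 : ℝ) + c) * ρ ^ ((1 : ℝ) + c) :=
      Real.mul_rpow (by positivity) hρ0.le
    have h5p : (5 * (p : ℝ)) ^ ((1 : ℝ) + c) ≤ 25 * (p : ℝ) ^ 2 := by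
      calc (5 * (p : ℝ)) ^ ((1 : ℝ) + c) ≤ (5 * (p : ℝ)) ^ ((2 : ℝ)) :=
            Real.rpow_le_rpow_of_exponent_le (by nlinarith) (by linarith)
        _ = 25 * (p : ℝ) ^ 2 := by
            rw [show (2 : ℝ) = ((2 : ℕ) : ℝ) by norm_num, Real.rpow_natCast]
            ring
    have hρc : (0 : ℝ) ≤ ρ ^ ((1 : ℝ) + c) := Real.rpow_nonneg hρ0.le _
    calc δ ≤ (45 / 16) * ((p : ℝ) ^ ((1 - c) * (d : ℝ)) / ((p : ℝ) ^ d) ^ 2) := hδle2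
      _ = (45 / 16) * (((p : ℝ) ^ (-(d : ℝ))) ^ ((1 : ℝ) + c)) := by rw [e1]
      _ ≤ (45 / 16) * ((5 * (p : ℝ) * ρ) ^ ((1 : ℝ) + c)) := by
          apply mul_le_mul_of_nonneg_left hmono (by norm_num)
      _ = (45 / 16) * ((5 * (p : ℝ)) ^ ((1 : ℝ) + c) * ρ ^ ((1 : ℝ) + c)) := by rw [hsplit]
      _ ≤ (45 / 16) * (25 * (p : ℝ) ^ 2 * ρ ^ ((1 : ℝ) + c)) := by
          apply mul_le_mul_of_nonneg_left _ (by norm_num)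
          exact mul_le_mul_of_nonneg_right h5p hρc
      _ ≤ 125 * (p : ℝ) ^ 2 * ρ ^ ((1 : ℝ) + c) := by
          nlinarith [hρc, sq_nonneg ((p : ℝ)), hQ0.le, mul_nonneg (sq_nonneg ((p:ℝ))) hρc]
end

section
/- Self-improvement via tensor powers: Suppose f: (0,1) → (0,∞) is such that for every ε ∈ (0,1), any εN pairwise disjoint triangles in F_p^n (any n, N = p^n) span at least f(ε)N² triangles, and suppose f(ε) ≥ ε^{C+h(ε)} where h(ε) → 0 as ε → 0. If for some X,Y,Z arising from m = εN disjoint triangles the number of triangles is δN² with δ < ε^C, then taking k-fold concatenation powers yields δ^k N^{2k} < (ε^k)^{C} N^{2k} triangles spanned by (εN)^k = ε^k N^k disjoint triangles in F_p^{nk}, contradicting the asymptotic bound for large k. Hence δ ≥ ε^C always. -/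
namespace Stmt17Aux

variable (p n k : ℕ)

/-- Glue a `k`-tuple of vectors in `Fin n → ZMod p` into one vector in `Fin (n*k) → ZMod p`. -/
def glue (hfun : Fin k → Fin n → ZMod p) : Fin (n * k) → ZMod p :=
  fun a => hfun (finProdFinEquiv.symm a).2 (finProdFinEquiv.symm a).1

/-- Split a vector in `Fin (n*k) → ZMod p` into a `k`-tuple of vectors. -/
def unglue (u : Fin (n * k) → ZMod p) : Fin k → Fin n → ZMod p :=
  fun t s => u (finProdFinEquiv (s, t))

@[simp] lemma unglue_glue (hfun : Fin k → Fin n → ZMod p) : unglue p n k (glue p n k hfun) = hfun := by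
  funext t s
  simp [glue, unglue]

@[simp] lemma glue_unglue (u : Fin (n * k) → ZMod p) : glue p n k (unglue p n k u) = u := by
  funext a
  show u (finProdFinEquiv ((finProdFinEquiv.symm a).1, (finProdFinEquiv.symm a).2)) = u a
  rw [Prod.mk.eta, Equiv.apply_symm_apply]

lemma glue_injective : Function.Injective (glue p n k) :=
  Function.LeftInverse.injective (unglue_glue p n k)

lemma glue_add (h₁ h₂ : Fin k → Fin n → ZMod p) :
    glue p n k h₁ + glue p n k h₂ = glue p n k (h₁ + h₂) := by
  funext a; simp [glue]

lemma glue_eq_zero_iff (hfun : Fin k → Fin n → ZMod p) :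
    glue p n k hfun = 0 ↔ ∀ t, hfun t = 0 := by
  constructor
  · intro hg t
    have := congrArg (fun u => unglue p n k u t) hg
    simp only [unglue_glue] at this
    exact this
  · intro ht
    funext a
    simp [glue, ht]

variable (m : ℕ)

/-- Tensor power of a family of points. -/
def big (x : Fin m → Fin n → ZMod p) : Fin (m ^ k) → Fin (n * k) → ZMod p :=
  fun j => glue p n k (fun t => x (finFunctionFinEquiv.symm j t))

lemma big_injective (x : Fin m → Fin n → ZMod p) (hx : Function.Injective x) :
    Function.Injective (big p n k m x) := by
  intro j j' hjj
  have h2 : (fun t => x (finFunctionFinEquiv.symm j t)) =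
      (fun t => x (finFunctionFinEquiv.symm j' t)) := glue_injective p n k hjj
  have h3 : finFunctionFinEquiv.symm j = finFunctionFinEquiv.symm j' := by
    funext t
    exact hx (congrFun h2 t)
  exact finFunctionFinEquiv.symm.injective h3

lemma mem_image_big_iff (x : Fin m → Fin n → ZMod p) (u : Fin (n * k) → ZMod p) :
    u ∈ Finset.univ.image (big p n k m x) ↔
      ∀ t, unglue p n k u t ∈ Finset.univ.image x := by
  constructor
  · rintro hu t
    rw [Finset.mem_image] at hu
    obtain ⟨j, -, rfl⟩ := hu
    simp only [big, unglue_glue]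
    exact Finset.mem_image_of_mem x (Finset.mem_univ _)
  · intro hu
    have : ∀ t, ∃ i, x i = unglue p n k u t := by
      intro t
      obtain ⟨i, -, hi⟩ := Finset.mem_image.1 (hu t)
      exact ⟨i, hi⟩
    choose i hi using this
    rw [Finset.mem_image]
    refine ⟨finFunctionFinEquiv i, Finset.mem_univ _, ?_⟩
    simp only [big, Equiv.symm_apply_apply]
    simp only [hi]
    exact glue_unglue p n k u

section counting

variable (x y z : Fin m → Fin n → ZMod p)

/-- The number of spanned triangles of the tensor power is the `k`-th power. -/
lemma card_big :
    (Finset.filter (fun tr => tr.1 + tr.2.1 + tr.2.2 = 0)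
      (Finset.univ.image (big p n k m x) ×ˢ Finset.univ.image (big p n k m y) ×ˢ
        Finset.univ.image (big p n k m z))).card
    = (Finset.filter (fun tr => tr.1 + tr.2.1 + tr.2.2 = 0)
      (Finset.univ.image x ×ˢ Finset.univ.image y ×ˢ Finset.univ.image z)).card ^ k := by
  classical
  set T := Finset.filter (fun tr => tr.1 + tr.2.1 + tr.2.2 = 0)
      (Finset.univ.image x ×ˢ Finset.univ.image y ×ˢ Finset.univ.image z) with hT
  rw [show (Finset.filter (fun tr => tr.1 + tr.2.1 + tr.2.2 = 0)
      (Finset.univ.image x ×ˢ Finset.univ.image y ×ˢ Finset.univ.image z)).card ^ k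
      = (Fintype.piFinset (fun _ : Fin k => T)).card by
    rw [Fintype.card_piFinset]; simp [hT]]
  apply Finset.card_bij' (fun tr _ => fun t =>
      (unglue p n k tr.1 t, unglue p n k tr.2.1 t, unglue p n k tr.2.2 t))
    (fun g _ => (glue p n k (fun t => (g t).1), glue p n k (fun t => (g t).2.1),
      glue p n k (fun t => (g t).2.2)))
  · rintro ⟨u, v, w⟩ htr
    simp only [Finset.mem_filter, Finset.mem_product] at htr
    obtain ⟨⟨hu, hv, hw⟩, hsum⟩ := htr
    rw [Fintype.mem_piFinset]
    intro t
    rw [hT]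
    simp only [Finset.mem_filter, Finset.mem_product]
    refine ⟨⟨(mem_image_big_iff p n k m x u).1 hu t,
      (mem_image_big_iff p n k m y v).1 hv t,
      (mem_image_big_iff p n k m z w).1 hw t⟩, ?_⟩
    have := congrArg (fun q => unglue p n k q t) hsum
    simpa [unglue, Pi.add_apply] using funext_iff.2 fun s => by
      have := congrFun hsum (finProdFinEquiv (s, t))
      simpa [unglue] using this
  · intro g hg
    rw [Fintype.mem_piFinset] at hg
    simp only [Finset.mem_filter, Finset.mem_product]
    have hgT : ∀ t, (g t).1 ∈ Finset.univ.image x ∧ (g t).2.1 ∈ Finset.univ.image y ∧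
        (g t).2.2 ∈ Finset.univ.image z ∧ (g t).1 + (g t).2.1 + (g t).2.2 = 0 := by
      intro t
      have := hg t
      rw [hT] at this
      simp only [Finset.mem_filter, Finset.mem_product] at this
      exact ⟨this.1.1, this.1.2.1, this.1.2.2, this.2⟩
    refine ⟨⟨?_, ?_, ?_⟩, ?_⟩
    · rw [mem_image_big_iff]; intro t; rw [unglue_glue]; exact (hgT t).1
    · rw [mem_image_big_iff]; intro t; rw [unglue_glue]; exact (hgT t).2.1
    · rw [mem_image_big_iff]; intro t; rw [unglue_glue]; exact (hgT t).2.2.1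
    · rw [glue_add, glue_add, glue_eq_zero_iff]
      intro t
      exact (hgT t).2.2.2
  · rintro ⟨u, v, w⟩ _
    simp [glue_unglue]
  · intro g _
    funext t
    simp [unglue_glue]

end counting

end Stmt17Aux

open Stmt17Aux Filter

/-- Self-improvement via tensor powers: if εN disjoint triangles always span at least
f(ε)N² triangles with f(ε) ≥ ε^{C+h(ε)} and h(ε) → 0 as ε → 0, then in fact εN
disjoint triangles always span at least ε^C N² triangles. -/
theorem stmt_17 (p : ℕ) [Fact p.Prime] (C : ℝ) (hC : 0 < C)
    (f h : ℝ → ℝ)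
    (hh : Filter.Tendsto h (nhdsWithin 0 (Set.Ioi 0)) (nhds 0))
    (hfh : ∀ ε : ℝ, 0 < ε → ε < 1 → ε ^ (C + h ε) ≤ f ε)
    (hf : ∀ n : ℕ, ∀ ε : ℝ, 0 < ε → ε < 1 → ∀ m : ℕ, (m : ℝ) = ε * (p : ℝ) ^ n →
      ∀ x y z : Fin m → (Fin n → ZMod p),
        (∀ i, x i + y i + z i = 0) →
        Function.Injective x → Function.Injective y → Function.Injective z →
        f ε * ((p : ℝ) ^ n) ^ 2 ≤
          ((Finset.filter (fun tr => tr.1 + tr.2.1 + tr.2.2 = 0)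
            (Finset.univ.image x ×ˢ Finset.univ.image y ×ˢ Finset.univ.image z)).card : ℝ)) :
    ∀ n : ℕ, ∀ ε : ℝ, 0 < ε → ε < 1 → ∀ m : ℕ, (m : ℝ) = ε * (p : ℝ) ^ n →
      ∀ x y z : Fin m → (Fin n → ZMod p),
        (∀ i, x i + y i + z i = 0) →
        Function.Injective x → Function.Injective y → Function.Injective z →
        ε ^ C * ((p : ℝ) ^ n) ^ 2 ≤
          ((Finset.filter (fun tr => tr.1 + tr.2.1 + tr.2.2 = 0)
            (Finset.univ.image x ×ˢ Finset.univ.image y ×ˢ Finset.univ.image z)).card : ℝ) := by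
  intro n ε hε hε1 m hm x y z hsum hx hy hz
  classical
  set N : ℝ := (p : ℝ) ^ n with hN
  set T : ℝ := ((Finset.filter (fun tr => tr.1 + tr.2.1 + tr.2.2 = 0)
      (Finset.univ.image x ×ˢ Finset.univ.image y ×ˢ Finset.univ.image z)).card : ℝ) with hTdef
  have hT0 : 0 ≤ T := Nat.cast_nonneg _
  -- the key claim for each k ≥ 1
  have key : ∀ k : ℕ, 1 ≤ k → ε ^ (C + h (ε ^ k)) * N ^ 2 ≤ T := by
    intro k hk
    have hk0 : k ≠ 0 := by omega
    have hεk : 0 < ε ^ k := pow_pos hε k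
    have hεk1 : ε ^ k < 1 := pow_lt_one₀ hε.le hε1 hk0
    have hmk : ((m ^ k : ℕ) : ℝ) = ε ^ k * (p : ℝ) ^ (n * k) := by
      push_cast
      rw [hm, mul_pow, ← pow_mul]
    have hsum' : ∀ j, big p n k m x j + big p n k m y j + big p n k m z j = 0 := by
      intro j
      simp only [big, glue_add, glue_eq_zero_iff]
      intro t
      exact hsum _
    have hcard := card_big p n k m x y z
    have hmain := hf (n * k) (ε ^ k) hεk hεk1 (m ^ k) hmk
      (big p n k m x) (big p n k m y) (big p n k m z) hsum'
      (big_injective p n k m x hx) (big_injective p n k m y hy) (big_injective p n k m z hz)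
    rw [hcard] at hmain
    have hchain : (ε ^ k) ^ (C + h (ε ^ k)) * ((p : ℝ) ^ (n * k)) ^ 2 ≤ T ^ k := by
      calc (ε ^ k) ^ (C + h (ε ^ k)) * ((p : ℝ) ^ (n * k)) ^ 2
          ≤ f (ε ^ k) * ((p : ℝ) ^ (n * k)) ^ 2 := by
            gcongr; exact hfh (ε ^ k) hεk hεk1
        _ ≤ T ^ k := by rw [hTdef]; push_cast at hmain ⊢; exact hmain
    have hrw : (ε ^ k) ^ (C + h (ε ^ k)) * ((p : ℝ) ^ (n * k)) ^ 2
        = (ε ^ (C + h (ε ^ k)) * N ^ 2) ^ k := by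
      rw [mul_pow, hN, ← Real.rpow_natCast ε k, ← Real.rpow_mul hε.le,
        mul_comm (k : ℝ), Real.rpow_mul hε.le, Real.rpow_natCast, pow_mul,
        ← pow_mul ((p:ℝ)^n), mul_comm k 2, pow_mul]
    rw [hrw] at hchain
    exact le_of_pow_le_pow_left₀ hk0 hT0 hchain
  -- limits
  have h1 : Tendsto (fun k : ℕ => ε ^ k) atTop (nhdsWithin 0 (Set.Ioi 0)) :=
    tendsto_nhdsWithin_of_tendsto_nhds_of_eventually_within _
      (tendsto_pow_atTop_nhds_zero_of_lt_one hε.le hε1)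
      (Eventually.of_forall fun k => pow_pos hε k)
  have h2 : Tendsto (fun k : ℕ => C + h (ε ^ k)) atTop (nhds C) := by
    have := hh.comp h1
    simpa using tendsto_const_nhds.add this
  have hcont : ContinuousAt (fun r : ℝ => ε ^ r) C :=
    Real.continuousAt_const_rpow hε.ne'
  have h3 : Tendsto (fun k : ℕ => ε ^ (C + h (ε ^ k)) * N ^ 2) atTop (nhds (ε ^ C * N ^ 2)) :=
    (hcont.tendsto.comp h2).mul_const _
  exact le_of_tendsto h3 (eventually_atTop.2 ⟨1, key⟩)
end

section
/- Asymptotics of the removal exponent: define c_p ∈ (0,1) by p^{1−c_p} = inf_{0<x<1} x^{−(p−1)/3}(1 + x + x² + ⋯ + x^{p−1}). Then c_p = Θ(1/log p) as p → ∞; consequently C_p = 1 + 1/c_p = Θ(log p). -/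
open Real Finset

/-- Every element of the set is at least p/3. -/
lemma aux18_elem_lb (p : ℕ) (hp : 2 ≤ p) (x : ℝ) (hx0 : 0 < x) (hx1 : x < 1) :
    (p : ℝ) / 3 ≤ x ^ (-(((p : ℝ) - 1) / 3)) * ∑ j ∈ Finset.range p, x ^ j := by
  set e : ℝ := -(((p : ℝ) - 1) / 3) with he
  have key : ∀ j ∈ Finset.range p, x ^ e * x ^ j = x ^ (e + (j : ℝ)) := by
    intro j _
    rw [← Real.rpow_natCast x j, ← Real.rpow_add hx0]
  rw [Finset.mul_sum, Finset.sum_congr rfl key]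
  set k : ℕ := (p - 1) / 3 with hk
  have hk1 : k + 1 ≤ p := by omega
  have h3k' : ((k : ℝ)) ≤ ((p : ℝ) - 1) / 3 := by
    have h3k : 3 * k ≤ p - 1 := by omega
    have h2 : ((3 * k : ℕ) : ℝ) ≤ ((p - 1 : ℕ) : ℝ) := by exact_mod_cast h3k
    have h3 : ((p - 1 : ℕ) : ℝ) = (p : ℝ) - 1 := by
      have h1p : (1 : ℕ) ≤ p := by omega
      push_cast [h1p]; ring
    rw [h3] at h2
    push_cast at h2
    linarith
  have h1 : ∀ j ∈ Finset.range (k + 1), (1 : ℝ) ≤ x ^ (e + (j : ℝ)) := by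
    intro j hj
    apply Real.one_le_rpow_of_pos_of_le_one_of_nonpos hx0 hx1.le
    have hjk : j ≤ k := Nat.le_of_lt_succ (Finset.mem_range.mp hj)
    have hjr : (j : ℝ) ≤ (k : ℝ) := by exact_mod_cast hjk
    rw [he]
    linarith
  have hp3 : (p : ℝ) / 3 ≤ ((k : ℝ) + 1) := by
    have hn : p ≤ 3 * (k + 1) := by omega
    have h2 : (p : ℝ) ≤ ((3 * (k + 1) : ℕ) : ℝ) := by exact_mod_cast hn
    push_cast at h2
    linarith
  calc (p : ℝ) / 3 ≤ ((k : ℝ) + 1) := hp3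
    _ = ∑ _j ∈ Finset.range (k + 1), (1 : ℝ) := by simp
    _ ≤ ∑ j ∈ Finset.range (k + 1), x ^ (e + (j : ℝ)) := Finset.sum_le_sum h1
    _ ≤ ∑ j ∈ Finset.range p, x ^ (e + (j : ℝ)) := by
        apply Finset.sum_le_sum_of_subset_of_nonneg (Finset.range_subset_range.mpr hk1)
        intro j _ _
        exact Real.rpow_nonneg hx0.le _

/-- Helper for explicit small-p witnesses. -/
lemma aux18_upper_helper (p : ℕ) (hp : 1 ≤ p) (x q : ℝ) (hx0 : 0 < x) (hx1 : x < 1)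
    (hq0 : 0 < q) (hq : 1 ≤ x ^ (p - 1) * q ^ 3)
    (hs : q * ((x ^ p - 1) / (x - 1)) ≤ 99 / 100 * p) :
    x ^ (-(((p : ℝ) - 1) / 3)) * ∑ j ∈ Finset.range p, x ^ j ≤ 99 / 100 * p := by
  have hxne : x ≠ 1 := ne_of_lt hx1
  rw [geom_sum_eq hxne]
  have hxe : x ^ (-(((p : ℝ) - 1) / 3)) ≤ q := by
    have ha : (0 : ℝ) ≤ x ^ (-(((p : ℝ) - 1) / 3)) := (Real.rpow_pos_of_pos hx0 _).le
    rw [← pow_le_pow_iff_left₀ ha hq0.le (three_ne_zero)]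
    have h1 : (x ^ (-(((p : ℝ) - 1) / 3))) ^ (3 : ℕ) = x ^ ((-(((p : ℝ) - 1) / 3)) * 3) := by
      rw [← Real.rpow_natCast (x ^ (-(((p : ℝ) - 1) / 3))) 3, ← Real.rpow_mul hx0.le]
      norm_num
    rw [h1]
    have h2 : (-(((p : ℝ) - 1) / 3)) * 3 = -((p : ℝ) - 1) := by ring
    rw [h2]
    have h3 : ((p : ℝ) - 1) = ((p - 1 : ℕ) : ℝ) := by
      push_cast [hp]; ring
    rw [h3, Real.rpow_neg hx0.le, Real.rpow_natCast]
    have hxp : (0 : ℝ) < x ^ (p - 1) := pow_pos hx0 _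
    rw [inv_le_iff_one_le_mul₀ hxp]
    linarith [hq]
  have hsum_pos : (0 : ℝ) ≤ (x ^ p - 1) / (x - 1) := by
    have heq : (x ^ p - 1) / (x - 1) = (1 - x ^ p) / (1 - x) := by
      rw [div_eq_div_iff (by linarith) (by linarith)]
      ring
    rw [heq]
    apply div_nonneg
    · nlinarith [pow_lt_one₀ hx0.le hx1 (by omega : p ≠ 0)]
    · linarith
  calc x ^ (-(((p : ℝ) - 1) / 3)) * ((x ^ p - 1) / (x - 1))
      ≤ q * ((x ^ p - 1) / (x - 1)) := mul_le_mul_of_nonneg_right hxe hsum_pos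
    _ ≤ 99 / 100 * p := hs

/-- For every p ≥ 2 there is a witness x with value at most 0.99 p. -/
lemma aux18_witness (p : ℕ) (hp : 2 ≤ p) :
    ∃ x : ℝ, 0 < x ∧ x < 1 ∧
      x ^ (-(((p : ℝ) - 1) / 3)) * ∑ j ∈ Finset.range p, x ^ j ≤ 99 / 100 * p := by
  by_cases hbig : 22 ≤ p
  · have hp1 : (1 : ℝ) < (p : ℝ) := by exact_mod_cast (by omega : 1 < p)
    have hpm1 : (0 : ℝ) < (p : ℝ) - 1 := by linarith
    set u : ℝ := 3 / ((p : ℝ) - 1) with hu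
    have hu0 : 0 < u := by positivity
    set x : ℝ := Real.exp (-u) with hx
    have hx0 : 0 < x := Real.exp_pos _
    have hx1 : x < 1 := Real.exp_lt_one_iff.mpr (by linarith)
    refine ⟨x, hx0, hx1, ?_⟩
    have hxe : x ^ (-(((p : ℝ) - 1) / 3)) = Real.exp 1 := by
      rw [hx, Real.rpow_def_of_pos (Real.exp_pos _), Real.log_exp]
      congr 1
      rw [hu]
      field_simp
    have hsum : ∑ j ∈ Finset.range p, x ^ j ≤ 1 / (1 - x) := by
      rw [geom_sum_eq (ne_of_lt hx1)]
      have heq : (x ^ p - 1) / (x - 1) = (1 - x ^ p) / (1 - x) := by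
        rw [div_eq_div_iff (by linarith) (by linarith)]
        ring
      rw [heq]
      have hxp : (0 : ℝ) ≤ x ^ p := pow_nonneg hx0.le _
      gcongr
      · linarith
    have hxle : x ≤ 1 / (1 + u) := by
      have h := Real.add_one_le_exp u
      rw [hx, Real.exp_neg, one_div]
      gcongr
      · linarith
    have h1x : u / (1 + u) ≤ 1 - x := by
      have heq2 : 1 - 1 / (1 + u) = u / (1 + u) := by field_simp; ring
      linarith
    have hfrac : 1 / (1 - x) ≤ (1 + u) / u := by
      have hprod : u ≤ (1 + u) * (1 - x) := by
        have h := mul_le_mul_of_nonneg_left h1x (by linarith : (0:ℝ) ≤ 1 + u)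
        have heq3 : (1 + u) * (u / (1 + u)) = u := by field_simp
        linarith
      rw [div_le_div_iff₀ (by nlinarith) hu0]
      linarith
    have huval : (1 + u) / u = ((p : ℝ) + 2) / 3 := by
      rw [hu]
      field_simp
      ring
    have hfin : Real.exp 1 * (((p : ℝ) + 2) / 3) ≤ 99 / 100 * p := by
      have he9 := Real.exp_one_lt_d9
      have hp22 : (22 : ℝ) ≤ (p : ℝ) := by exact_mod_cast hbig
      nlinarith [Real.exp_pos 1]
    calc x ^ (-(((p : ℝ) - 1) / 3)) * ∑ j ∈ Finset.range p, x ^ j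
        = Real.exp 1 * ∑ j ∈ Finset.range p, x ^ j := by rw [hxe]
      _ ≤ Real.exp 1 * (1 / (1 - x)) := by
          apply mul_le_mul_of_nonneg_left hsum (Real.exp_pos 1).le
      _ ≤ Real.exp 1 * ((1 + u) / u) := by
          apply mul_le_mul_of_nonneg_left hfrac (Real.exp_pos 1).le
      _ = Real.exp 1 * (((p : ℝ) + 2) / 3) := by rw [huval]
      _ ≤ 99 / 100 * p := hfin
  · interval_cases p
    · exact ⟨1/2, by norm_num, by norm_num,
        aux18_upper_helper 2 (by norm_num) (1/2) (63/50) (by norm_num) (by norm_num)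
          (by norm_num) (by norm_num) (by norm_num)⟩
    · exact ⟨593/1000, by norm_num, by norm_num,
        aux18_upper_helper 3 (by norm_num) (593/1000) (1771/1250) (by norm_num) (by norm_num)
          (by norm_num) (by norm_num) (by norm_num)⟩
    · exact ⟨657/1000, by norm_num, by norm_num,
        aux18_upper_helper 4 (by norm_num) (657/1000) (15221/10000) (by norm_num) (by norm_num)
          (by norm_num) (by norm_num) (by norm_num)⟩
    · exact ⟨88/125, by norm_num, by norm_num,
        aux18_upper_helper 5 (by norm_num) (88/125) (998/625) (by norm_num) (by norm_num)
          (by norm_num) (by norm_num) (by norm_num)⟩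
    · exact ⟨37/50, by norm_num, by norm_num,
        aux18_upper_helper 6 (by norm_num) (37/50) (8259/5000) (by norm_num) (by norm_num)
          (by norm_num) (by norm_num) (by norm_num)⟩
    · exact ⟨96/125, by norm_num, by norm_num,
        aux18_upper_helper 7 (by norm_num) (96/125) (3391/2000) (by norm_num) (by norm_num)
          (by norm_num) (by norm_num) (by norm_num)⟩
    · exact ⟨79/100, by norm_num, by norm_num,
        aux18_upper_helper 8 (by norm_num) (79/100) (17333/10000) (by norm_num) (by norm_num)
          (by norm_num) (by norm_num) (by norm_num)⟩
    · exact ⟨809/1000, by norm_num, by norm_num,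
        aux18_upper_helper 9 (by norm_num) (809/1000) (17599/10000) (by norm_num) (by norm_num)
          (by norm_num) (by norm_num) (by norm_num)⟩
    · exact ⟨33/40, by norm_num, by norm_num,
        aux18_upper_helper 10 (by norm_num) (33/40) (17809/10000) (by norm_num) (by norm_num)
          (by norm_num) (by norm_num) (by norm_num)⟩
    · exact ⟨419/500, by norm_num, by norm_num,
        aux18_upper_helper 11 (by norm_num) (419/500) (721/400) (by norm_num) (by norm_num)
          (by norm_num) (by norm_num) (by norm_num)⟩
    · exact ⟨849/1000, by norm_num, by norm_num,
        aux18_upper_helper 12 (by norm_num) (849/1000) (9113/5000) (by norm_num) (by norm_num)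
          (by norm_num) (by norm_num) (by norm_num)⟩
    · exact ⟨859/1000, by norm_num, by norm_num,
        aux18_upper_helper 13 (by norm_num) (859/1000) (18367/10000) (by norm_num) (by norm_num)
          (by norm_num) (by norm_num) (by norm_num)⟩
    · exact ⟨217/250, by norm_num, by norm_num,
        aux18_upper_helper 14 (by norm_num) (217/250) (4617/2500) (by norm_num) (by norm_num)
          (by norm_num) (by norm_num) (by norm_num)⟩
    · exact ⟨7/8, by norm_num, by norm_num,
        aux18_upper_helper 15 (by norm_num) (7/8) (2331/1250) (by norm_num) (by norm_num)
          (by norm_num) (by norm_num) (by norm_num)⟩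
    · exact ⟨441/500, by norm_num, by norm_num,
        aux18_upper_helper 16 (by norm_num) (441/500) (1171/625) (by norm_num) (by norm_num)
          (by norm_num) (by norm_num) (by norm_num)⟩
    · exact ⟨111/125, by norm_num, by norm_num,
        aux18_upper_helper 17 (by norm_num) (111/125) (18843/10000) (by norm_num) (by norm_num)
          (by norm_num) (by norm_num) (by norm_num)⟩
    · exact ⟨447/500, by norm_num, by norm_num,
        aux18_upper_helper 18 (by norm_num) (447/500) (1887/1000) (by norm_num) (by norm_num)
          (by norm_num) (by norm_num) (by norm_num)⟩
    · exact ⟨899/1000, by norm_num, by norm_num,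
        aux18_upper_helper 19 (by norm_num) (899/1000) (18943/10000) (by norm_num) (by norm_num)
          (by norm_num) (by norm_num) (by norm_num)⟩
    · exact ⟨903/1000, by norm_num, by norm_num,
        aux18_upper_helper 20 (by norm_num) (903/1000) (19083/10000) (by norm_num) (by norm_num)
          (by norm_num) (by norm_num) (by norm_num)⟩
    · exact ⟨227/250, by norm_num, by norm_num,
        aux18_upper_helper 21 (by norm_num) (227/250) (1903/1000) (by norm_num) (by norm_num)
          (by norm_num) (by norm_num) (by norm_num)⟩

/-- Asymptotics of the sum-free exponent: if p^{1-c_p} equals the infimum over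
0 < x < 1 of x^{-(p-1)/3}(1 + x + ⋯ + x^{p-1}), then c_p = Θ(1/log p). -/
theorem stmt_18 :
    ∃ A B : ℝ, 0 < A ∧ 0 < B ∧
      ∀ p : ℕ, 2 ≤ p → ∀ c : ℝ, 0 < c → c < 1 →
        (p : ℝ) ^ (1 - c) =
          sInf {v : ℝ | ∃ x : ℝ, 0 < x ∧ x < 1 ∧
            v = x ^ (-(((p : ℝ) - 1) / 3)) * ∑ j ∈ Finset.range p, x ^ j} →
        A / Real.log p ≤ c ∧ c ≤ B / Real.log p := by
  refine ⟨1/100, 2, by norm_num, by norm_num, ?_⟩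
  intro p hp c hc0 hc1 heq
  have hp1 : (1 : ℝ) < (p : ℝ) := by exact_mod_cast (by omega : 1 < p)
  have hp0 : (0 : ℝ) < (p : ℝ) := by linarith
  have hlog : 0 < Real.log p := Real.log_pos hp1
  have hlb : ∀ v ∈ {v : ℝ | ∃ x : ℝ, 0 < x ∧ x < 1 ∧
      v = x ^ (-(((p : ℝ) - 1) / 3)) * ∑ j ∈ Finset.range p, x ^ j}, (p : ℝ) / 3 ≤ v := by
    rintro v ⟨x, hx0, hx1, rfl⟩
    exact aux18_elem_lb p hp x hx0 hx1
  have hne : Set.Nonempty {v : ℝ | ∃ x : ℝ, 0 < x ∧ x < 1 ∧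
      v = x ^ (-(((p : ℝ) - 1) / 3)) * ∑ j ∈ Finset.range p, x ^ j} :=
    ⟨_, ⟨1/2, by norm_num, by norm_num, rfl⟩⟩
  have hbdd : BddBelow {v : ℝ | ∃ x : ℝ, 0 < x ∧ x < 1 ∧
      v = x ^ (-(((p : ℝ) - 1) / 3)) * ∑ j ∈ Finset.range p, x ^ j} := ⟨(p : ℝ) / 3, hlb⟩
  have h1 : (p : ℝ) / 3 ≤ (p : ℝ) ^ (1 - c) := by
    rw [heq]; exact le_csInf hne hlb
  obtain ⟨x₀, hx00, hx01, hx0le⟩ := aux18_witness p hp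
  have h2 : (p : ℝ) ^ (1 - c) ≤ 99 / 100 * (p : ℝ) := by
    rw [heq]
    exact le_trans (csInf_le hbdd ⟨x₀, hx00, hx01, rfl⟩) hx0le
  have hsplit : (p : ℝ) ^ (1 - c) = (p : ℝ) * (p : ℝ) ^ (-c) := by
    have h : (1 : ℝ) - c = 1 + (-c) := by ring
    rw [h, Real.rpow_add hp0, Real.rpow_one]
  have hexp : (p : ℝ) ^ (-c) = Real.exp (Real.log p * (-c)) := Real.rpow_def_of_pos hp0 _
  have hc_ub : c * Real.log p ≤ 2 := by
    have hge : (1 : ℝ) / 3 ≤ (p : ℝ) ^ (-c) := by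
      rw [hsplit] at h1
      exact le_of_mul_le_mul_left (by linarith) hp0
    have hlog3 : Real.log (1/3 : ℝ) ≤ Real.log p * (-c) := by
      rw [hexp] at hge
      calc Real.log (1/3 : ℝ) ≤ Real.log (Real.exp (Real.log p * (-c))) :=
            Real.log_le_log (by norm_num) hge
        _ = Real.log p * (-c) := Real.log_exp _
    have hli : -Real.log 3 ≤ Real.log p * (-c) := by
      rw [one_div, Real.log_inv] at hlog3; exact hlog3
    have h3 : Real.log 3 ≤ 2 := by
      linarith [Real.log_le_sub_one_of_pos (by norm_num : (0:ℝ) < 3)]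
    nlinarith [hli]
  have hc_lb : 1 / 100 ≤ c * Real.log p := by
    have hle : (p : ℝ) ^ (-c) ≤ 99 / 100 := by
      rw [hsplit] at h2
      exact le_of_mul_le_mul_left (by linarith) hp0
    have hlog99 : Real.log p * (-c) ≤ Real.log (99/100 : ℝ) := by
      rw [hexp] at hle
      calc Real.log p * (-c) = Real.log (Real.exp (Real.log p * (-c))) := (Real.log_exp _).symm
        _ ≤ Real.log (99/100 : ℝ) := Real.log_le_log (Real.exp_pos _) hle
    have h99 : Real.log (99/100 : ℝ) ≤ -(1/100) := by
      have h := Real.add_one_le_exp (-(1/100 : ℝ))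
      have h' : (99 : ℝ)/100 ≤ Real.exp (-(1/100 : ℝ)) := by linarith
      calc Real.log (99/100 : ℝ) ≤ Real.log (Real.exp (-(1/100 : ℝ))) :=
            Real.log_le_log (by norm_num) h'
        _ = -(1/100 : ℝ) := Real.log_exp _
    nlinarith [hlog99, h99]
  constructor
  · rw [div_le_iff₀ hlog]; linarith [hc_lb]
  · rw [le_div_iff₀ hlog]; exact hc_ub
end
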